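/- arXiv:1009.2486 — 4 statements merged into one kernel-verified Lean document; each statement's English description precedes it below -/
import Mathlib

section
/- Let p be an odd prime, p ≠ 3. Then $\sum_{k=1}^{p-1} \frac{D_k(3)}{k} \equiv -2\,\frac{2^{p-1}-1}{p} \pmod{p}$, where $1/k$ denotes the inverse of k mod p. -/
/-- The Delannoy polynomial `D_n(x)` at an integer `x`. -/
def delannoyPoly (n : ℕ) (x : ℤ) : ℤ :=
  ∑ k ∈ Finset.range (n + 1), (n.choose k * (n + k).choose k : ℤ) * x ^ k

open Finset

section Helpers

variable {p : ℕ}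

lemma hockey (n r : ℕ) : ∑ a ∈ range (n+1), a.choose r = (n+1).choose (r+1) := by
  rw [← Nat.sum_Icc_choose]
  rw [Finset.sum_subset (Finset.Icc_subset_Icc_left (Nat.zero_le r))]
  · rw [← Nat.Ico_zero_eq_range, Finset.Ico_add_one_right_eq_Icc]
  · intro x hx hx'
    simp only [mem_Icc, not_and, not_le] at hx hx'
    exact Nat.choose_eq_zero_of_lt (by omega)

lemma vander (r s n : ℕ) :
    ∑ a ∈ range (n+1), a.choose r * (n-a).choose s = (n+1).choose (r+s+1) := by
  induction r generalizing n with
  | zero =>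
    simp only [Nat.choose_zero_right, one_mul, Nat.zero_add]
    rw [← Finset.sum_range_reflect]
    simp only [Nat.add_sub_cancel]
    have : ∀ a ∈ range (n+1), (n - (n - a)).choose s = a.choose s := by
      intro a ha
      rw [Nat.sub_sub_self (by simp at ha; omega)]
    rw [Finset.sum_congr rfl this, hockey]
  | succ r ih =>
    induction n with
    | zero => simp [Nat.choose_eq_zero_of_lt]
    | succ n ihn =>
      rw [Finset.sum_range_succ' (fun a => a.choose (r+1) * (n+1-a).choose s)]
      simp only [Nat.choose_succ_succ, Nat.add_mul, Nat.choose_zero_right,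
        Nat.zero_mul, Nat.add_zero, Nat.succ_sub_succ]
      rw [Finset.sum_add_distrib]
      have h0 : (Nat.choose 0 (r+1)) * (n+1-0).choose s = 0 := by simp
      rw [h0, Nat.add_zero, ih n, ihn]
      rw [← Nat.choose_succ_succ']
      ring_nf

lemma choose_psub1 (hp : p.Prime) (t : ℕ) (ht : t ≤ p - 1) :
    (((p-1).choose t : ℕ) : ZMod p) = (-1)^t := by
  induction t with
  | zero => simp
  | succ t ih =>
    obtain ⟨q, rfl⟩ : ∃ q, p = q + 1 := ⟨p - 1, by have := hp.one_le; omega⟩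
    simp only [Nat.add_sub_cancel] at *
    have hpas : q.choose t + q.choose (t+1) = (q+1).choose (t+1) :=
      (Nat.choose_succ_succ q t).symm
    have hdvd : (q+1) ∣ (q+1).choose (t+1) :=
      Nat.Prime.dvd_choose_self hp (by omega) (by omega)
    have hcast : (((q+1).choose (t+1) : ℕ) : ZMod (q+1)) = 0 := by
      rw [ZMod.natCast_eq_zero_iff]; exact hdvd
    have h2 : ((q.choose t : ℕ) : ZMod (q+1)) + (q.choose (t+1) : ZMod (q+1)) = 0 := by
      rw [← Nat.cast_add, hpas, hcast]
    rw [ih (by omega)] at h2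
    rw [pow_succ]
    linear_combination h2

lemma chooseFlip (hp : p.Prime) {k j : ℕ} (hk : k ≤ p - 1) (hj : j ≤ k) :
    (((k+j).choose j : ℕ) : ZMod p) = (-1)^j * (((p-1-k).choose j : ℕ) : ZMod p) := by
  have hp1 := hp.one_le
  haveI : Fact p.Prime := ⟨hp⟩
  by_cases hc : j ≤ p - 1 - k
  · have hfac : ((j.factorial : ℕ) : ZMod p) ≠ 0 := by
      intro h
      rw [ZMod.natCast_eq_zero_iff] at h
      have := (Nat.Prime.dvd_factorial hp).mp h
      omega
    apply mul_right_cancel₀ hfac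
    have e1 : ((k+j).choose j) * j.factorial = ∏ i ∈ range j, (k+1+i) := by
      rw [mul_comm, ← Nat.descFactorial_eq_factorial_mul_choose,
          Nat.descFactorial_eq_prod_range, ← Finset.prod_range_reflect]
      apply Finset.prod_congr rfl; intro i hi
      simp only [mem_range] at hi; omega
    have e2 : ((p-1-k).choose j) * j.factorial = ∏ i ∈ range j, (p-1-k-i) := by
      rw [mul_comm, ← Nat.descFactorial_eq_factorial_mul_choose,
          Nat.descFactorial_eq_prod_range]
    have c1 : (((k+j).choose j : ℕ) : ZMod p) * ((j.factorial : ℕ) : ZMod p)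
        = ∏ i ∈ range j, ((k+1+i : ℕ) : ZMod p) := by
      rw [← Nat.cast_mul, e1, Nat.cast_prod]
    have c2 : (((p-1-k).choose j : ℕ) : ZMod p) * ((j.factorial : ℕ) : ZMod p)
        = ∏ i ∈ range j, ((p-1-k-i : ℕ) : ZMod p) := by
      rw [← Nat.cast_mul, e2, Nat.cast_prod]
    have c3 : ∏ i ∈ range j, ((p-1-k-i : ℕ) : ZMod p)
        = (-1)^j * ∏ i ∈ range j, ((k+1+i : ℕ) : ZMod p) := by
      have term : ∀ i ∈ range j, ((p-1-k-i : ℕ) : ZMod p) = -1 * ((k+1+i : ℕ) : ZMod p) := by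
        intro i hi
        simp only [mem_range] at hi
        have hsum : (p-1-k-i) + (k+1+i) = p := by omega
        have : ((p-1-k-i : ℕ) : ZMod p) + ((k+1+i : ℕ) : ZMod p) = 0 := by
          rw [← Nat.cast_add, hsum, ZMod.natCast_self]
        linear_combination this
      rw [Finset.prod_congr rfl term, Finset.prod_mul_distrib]
      simp
    rw [c1, mul_assoc, c2, c3]
    rw [← mul_assoc ((-1:ZMod p)^j), ← mul_pow]
    norm_num
  · have h1 : (p-1-k).choose j = 0 := Nat.choose_eq_zero_of_lt (by omega)
    have h2 : (p:ℕ) ∣ (k+j).choose j := by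
      have hfact : ((k+j).choose j) * j.factorial * k.factorial = (k+j).factorial := by
        have := Nat.choose_mul_factorial_mul_factorial (Nat.le_add_left j k)
        simpa using this
      have hdvd : p ∣ (k+j).factorial := Nat.dvd_factorial hp.pos (by omega)
      rw [← hfact] at hdvd
      rcases (Nat.Prime.dvd_mul hp).mp hdvd with h | h
      · rcases (Nat.Prime.dvd_mul hp).mp h with h' | h'
        · exact h'
        · exact absurd ((Nat.Prime.dvd_factorial hp).mp h') (by omega)
      · exact absurd ((Nat.Prime.dvd_factorial hp).mp h) (by omega)
    rw [h1]
    simp [(ZMod.natCast_eq_zero_iff _ _).mpr h2]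

lemma harmSum (hp : p.Prime) (hodd : Odd p) :
    ∑ k ∈ Icc 1 (p-1), ((k : ZMod p))⁻¹ = 0 := by
  have hp1 := hp.one_le
  haveI : Fact p.Prime := ⟨hp⟩
  have hmod : p % 2 = 1 := Nat.odd_iff.mp hodd
  apply Finset.sum_involution (g := fun k _ => p - k)
  · intro a ha
    simp only [mem_Icc] at ha
    have hcast : ((p - a : ℕ) : ZMod p) = -(a : ZMod p) := by
      rw [Nat.cast_sub (by omega), ZMod.natCast_self, zero_sub]
    rw [hcast, inv_neg]
    ring
  · intro a ha _
    simp only [mem_Icc] at ha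
    omega
  · intro a ha
    simp only [mem_Icc] at ha ⊢
    omega
  · intro a ha
    simp only [mem_Icc] at ha
    omega

lemma sum_range_two_mul' {M : Type*} [AddCommMonoid M] (n : ℕ) (f : ℕ → M) :
    ∑ k ∈ range (2*n), f k = ∑ j ∈ range n, (f (2*j) + f (2*j+1)) := by
  induction n with
  | zero => simp
  | succ n ih =>
    have h : 2*(n+1) = (2*n+1)+1 := by ring
    rw [h, Finset.sum_range_succ, Finset.sum_range_succ, ih, Finset.sum_range_succ]
    rw [add_assoc]

lemma even_binom_sum (p : ℕ) (hp : p.Prime) (hodd : Odd p) (hp3 : p ≠ 3) :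
    ∑ j ∈ range ((p-1)/2 + 1), (p.choose (2*j) : ℤ) * (-3)^j = 2^(p-1) := by
  set m := (p-1)/2 with hm
  have hp2 : 2 ≤ p := hp.two_le
  have hmod2 : p % 2 = 1 := Nat.odd_iff.mp hodd
  have hmod3 : p % 3 ≠ 0 := by
    intro h
    have h3 : (3:ℕ) ∣ p := Nat.dvd_of_mod_eq_zero h
    rcases (Nat.Prime.eq_one_or_self_of_dvd hp 3 h3) with h' | h' <;> omega
  set u : ℤ√(-3) := ⟨1, 1⟩ with hu
  -- re is additive
  have hre : ∀ (s : Finset ℕ) (f : ℕ → ℤ√(-3)), (∑ i ∈ s, f i).re = ∑ i ∈ s, (f i).re := by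
    intro s f
    exact map_sum (⟨⟨Zsqrtd.re, rfl⟩, fun _ _ => rfl⟩ : ℤ√(-3) →+ ℤ) f s
  -- binomial expansion
  have hu1 : u = Zsqrtd.sqrtd + 1 := by
    ext <;> simp [hu]
  have hpow : u^p = ∑ k ∈ range (p+1), (p.choose k : ℤ√(-3)) * Zsqrtd.sqrtd^k := by
    rw [hu1, add_pow]
    apply Finset.sum_congr rfl
    intro k _
    push_cast
    ring
  have hp1 : p + 1 = 2*(m+1) := by omega
  have hs2 : (Zsqrtd.sqrtd : ℤ√(-3))^2 = ((-3 : ℤ) : ℤ√(-3)) := by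
    ext <;> simp [pow_two]
  have hrep : (u^p).re = ∑ j ∈ range (m+1), (p.choose (2*j) : ℤ) * (-3)^j := by
    rw [hpow, hp1, sum_range_two_mul', hre]
    apply Finset.sum_congr rfl
    intro j _
    have e1 : (Zsqrtd.sqrtd : ℤ√(-3))^(2*j) = (((-3:ℤ)^j : ℤ) : ℤ√(-3)) := by
      rw [pow_mul, hs2]; push_cast; ring
    have e2 : (Zsqrtd.sqrtd : ℤ√(-3))^(2*j+1) = (((-3:ℤ)^j : ℤ) : ℤ√(-3)) * Zsqrtd.sqrtd := by
      rw [pow_succ, e1]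
    rw [Zsqrtd.re_add, e1, e2]
    simp only [Zsqrtd.re_mul, Zsqrtd.im_mul, Zsqrtd.re_intCast, Zsqrtd.im_intCast,
      Zsqrtd.re_natCast, Zsqrtd.im_natCast, Zsqrtd.re_sqrtd, Zsqrtd.im_sqrtd]
    ring
  -- periodicity
  have hu3 : u^3 = ((-8 : ℤ) : ℤ√(-3)) := by
    ext <;> simp [pow_succ, pow_zero, hu, Zsqrtd.re_mul, Zsqrtd.im_mul] <;> ring
  have hu6 : u^6 = ((64 : ℤ) : ℤ√(-3)) := by
    have : u^6 = (u^3)^2 := by ring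
    rw [this, hu3]
    norm_cast
  obtain ⟨q, r, hqr, hr⟩ : ∃ q r, p = 6*q + r ∧ (r = 1 ∨ r = 5) := by
    refine ⟨p / 6, p % 6, by omega, by omega⟩
  have hup : u^p = (((64^q : ℤ)) : ℤ√(-3)) * u^r := by
    rw [hqr, pow_add, pow_mul, hu6]
    push_cast
    ring
  have hu5re : (u^5).re = 16 := by
    have : u^5 = u^3 * (u * u) := by ring
    rw [this, hu3]
    simp [hu, Zsqrtd.re_mul, Zsqrtd.im_mul]
  have hfinal : (u^p).re = 2^(p-1) := by
    rw [hup, show ∀ (n : ℤ) (z : ℤ√(-3)), ((n : ℤ√(-3)) * z).re = n * z.re from fun n z => by simp [Zsqrtd.re_mul]]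
    rcases hr with rfl | rfl
    · have : (u^1).re = 1 := by simp [hu]
      rw [this, mul_one]
      have : (64:ℤ) = 2^6 := by norm_num
      rw [this, ← pow_mul]
      congr 1
      omega
    · rw [hu5re]
      have : (64:ℤ)^q * 16 = 2^(6*q+4) := by
        rw [pow_add]
        norm_num
        rw [show (64:ℤ) = 2^6 by norm_num, ← pow_mul]
      rw [this]
      congr 1
      omega
  rw [← hrep, hfinal]

lemma castNeZero (hp : p.Prime) {k : ℕ} (h1 : 1 ≤ k) (h2 : k ≤ p - 1) :
    ((k : ℕ) : ZMod p) ≠ 0 := by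
  have hp1 := hp.one_le
  intro h
  rw [ZMod.natCast_eq_zero_iff] at h
  have := Nat.le_of_dvd (by omega) h
  omega

lemma invFormula (hp : p.Prime) {j : ℕ} (h1 : 1 ≤ j) (h2 : j ≤ (p-1)/2) :
    ((j : ℕ) : ZMod p)⁻¹ = -2 * ((p.choose (2*j) / p : ℕ) : ZMod p) := by
  haveI : Fact p.Prime := ⟨hp⟩
  have hp2 := hp.two_le
  have h2j : 2*j ≤ p - 1 := by omega
  have hd : p ∣ p.choose (2*j) := Nat.Prime.dvd_choose_self hp (by omega) (by omega)
  have hcj : p * (p.choose (2*j) / p) = p.choose (2*j) := Nat.mul_div_cancel' hd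
  obtain ⟨b, rfl⟩ : ∃ b, j = b + 1 := ⟨j - 1, by omega⟩
  have hnat : p * ((p-1).choose (2*(b+1) - 1)) = p.choose (2*(b+1)) * (2*(b+1)) := by
    have h := Nat.add_one_mul_choose_eq (p-1) (2*(b+1)-1)
    have e1 : p-1+1 = p := by omega
    have e2 : 2*(b+1)-1+1 = 2*(b+1) := by omega
    rw [e1, e2] at h
    exact h
  have key : (p-1).choose (2*(b+1) - 1) = (2*(b+1)) * (p.choose (2*(b+1)) / p) := by
    apply Nat.eq_of_mul_eq_mul_left hp.pos
    rw [hnat, show p * (2*(b+1) * (p.choose (2*(b+1))/p)) = (2*(b+1)) * (p * (p.choose (2*(b+1))/p)) from by ring, hcj]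
    ring
  have hcast : (((p-1).choose (2*(b+1) - 1) : ℕ) : ZMod p) = (-1 : ZMod p) := by
    rw [choose_psub1 hp _ (by omega)]
    have : Odd (2*(b+1) - 1) := ⟨b, by omega⟩
    exact this.neg_one_pow
  rw [key] at hcast
  push_cast at hcast
  have hj0 : (((b+1 : ℕ)) : ZMod p) ≠ 0 := castNeZero hp (by omega) (by omega)
  have hj0' : ((b : ZMod p) + 1) ≠ 0 := by push_cast at hj0; exact hj0
  field_simp
  push_cast
  linear_combination hcast

end Helpers

theorem sun_1_4 (p : ℕ) [Fact p.Prime] (hp : Odd p) (hp3 : p ≠ 3) :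
    ∑ k ∈ Finset.Icc 1 (p - 1), (delannoyPoly k 3 : ZMod p) * (k : ZMod p)⁻¹ =
      -2 * (((2 ^ (p - 1) - 1) / p : ℤ) : ZMod p) := by
  have hpp : p.Prime := Fact.out
  have hp2 : 2 ≤ p := hpp.two_le
  have hmod2 : p % 2 = 1 := Nat.odd_iff.mp hp
  set m := (p-1)/2 with hm
  set c : ℕ → ℕ := fun j => p.choose (2*j) / p with hc
  set I : ℕ → ZMod p := fun j =>
    ∑ k ∈ Icc 1 (p-1), (k.choose j : ZMod p) * ((p-1-k).choose j : ZMod p) * ((k : ℕ) : ZMod p)⁻¹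
    with hI
  -- Step 1
  have step1 : ∀ k ∈ Icc 1 (p-1), (delannoyPoly k 3 : ZMod p) * ((k : ℕ) : ZMod p)⁻¹
      = ∑ j ∈ range p, (-3:ZMod p)^j *
          ((k.choose j : ZMod p) * ((p-1-k).choose j : ZMod p) * ((k : ℕ) : ZMod p)⁻¹) := by
    intro k hk
    simp only [mem_Icc] at hk
    have hD : (delannoyPoly k 3 : ZMod p)
        = ∑ j ∈ range p, (-3:ZMod p)^j * ((k.choose j : ZMod p) * ((p-1-k).choose j : ZMod p)) := by
      rw [delannoyPoly]
      push_cast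
      rw [Finset.sum_subset (by
        intro x hx; simp only [mem_range] at *; omega : range (k+1) ⊆ range p)]
      · apply Finset.sum_congr rfl
        intro j hj
        simp only [mem_range] at hj
        by_cases hjk : j ≤ k
        · rw [chooseFlip hpp (by omega) hjk,
            show ((-3:ZMod p))^j = (-1)^j * 3^j from by rw [← neg_one_mul, mul_pow]]
          ring
        · rw [Nat.choose_eq_zero_of_lt (by omega : k < j)]
          push_cast
          ring
      · intro x hx hx'
        simp only [mem_range] at hx hx'
        rw [Nat.choose_eq_zero_of_lt (by omega : k < x)]
        push_cast
        ring
    rw [hD, Finset.sum_mul]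
    apply Finset.sum_congr rfl
    intro j _
    ring
  rw [Finset.sum_congr rfl step1, Finset.sum_comm]
  have step2 : ∀ j ∈ range p,
      (∑ k ∈ Icc 1 (p-1), (-3:ZMod p)^j *
        ((k.choose j : ZMod p) * ((p-1-k).choose j : ZMod p) * ((k : ℕ) : ZMod p)⁻¹))
      = (-3:ZMod p)^j * I j := by
    intro j _
    rw [hI, Finset.mul_sum]
  rw [Finset.sum_congr rfl step2]
  -- I 0 = 0
  have hI0 : I 0 = 0 := by
    rw [hI]
    simp only [Nat.choose_zero_right, Nat.cast_one, one_mul]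
    exact harmSum hpp hp
  -- I j for 1 ≤ j ≤ p-1
  have stepI : ∀ j, 1 ≤ j → j ≤ p - 1 →
      I j = ((j : ℕ) : ZMod p)⁻¹ * (((p-1).choose (2*j) : ℕ) : ZMod p) := by
    intro j hj1 hj2
    have hterm : ∀ k ∈ Icc 1 (p-1),
        (k.choose j : ZMod p) * ((p-1-k).choose j : ZMod p) * ((k : ℕ) : ZMod p)⁻¹
        = ((j : ℕ) : ZMod p)⁻¹ * (((k-1).choose (j-1) * ((p-1-k).choose j) : ℕ) : ZMod p) := by
      intro k hk
      simp only [mem_Icc] at hk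
      obtain ⟨a, rfl⟩ : ∃ a, k = a + 1 := ⟨k - 1, by omega⟩
      obtain ⟨b, rfl⟩ : ∃ b, j = b + 1 := ⟨j - 1, by omega⟩
      have hnat : (a+1) * a.choose b = (a+1).choose (b+1) * (b+1) :=
        Nat.add_one_mul_choose_eq a b
      have hcast : ((a+1 : ℕ) : ZMod p) * (a.choose b : ZMod p)
          = ((a+1).choose (b+1) : ZMod p) * ((b+1 : ℕ) : ZMod p) := by
        exact_mod_cast congrArg (Nat.cast : ℕ → ZMod p) hnat
      have hk0 : ((a+1 : ℕ) : ZMod p) ≠ 0 := castNeZero hpp (by omega) (by omega)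
      have hj0 : ((b+1 : ℕ) : ZMod p) ≠ 0 := castNeZero hpp (by omega) (by omega)
      simp only [Nat.add_sub_cancel]
      push_cast
      push_cast at hcast hk0 hj0
      field_simp
      linear_combination (-(((p - 1 - (a+1)).choose (b+1) : ℕ) : ZMod p)) * hcast
    simp only [hI]
    rw [Finset.sum_congr rfl hterm, ← Finset.mul_sum, ← Nat.cast_sum]
    congr 1
    have hIcc : Icc 1 (p-1) = Ico 1 p := by
      rw [← Finset.Ico_add_one_right_eq_Icc]
      congr 1
      omega
    rw [hIcc, Finset.sum_Ico_eq_sum_range]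
    have hrng : p - 1 = (p-2) + 1 := by omega
    have hre : ∀ i ∈ range (p-1),
        (1+i-1).choose (j-1) * ((p-1-(1+i)).choose j) = i.choose (j-1) * ((p-2-i).choose j) := by
      intro i _
      rw [show 1+i-1 = i from by omega, show p-1-(1+i) = p-2-i from by omega]
    rw [Finset.sum_congr rfl hre, hrng, vander,
      show p - 2 + 1 = p - 1 from by omega, show j - 1 + j + 1 = 2*j from by omega]
  -- peel off j = 0
  rw [show range p = range ((p-1)+1) from by congr 1; omega, Finset.sum_range_succ']
  rw [hI0]
  simp only [pow_zero, mul_zero, add_zero, one_mul]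
  -- now sum over i in range (p-1) of (-3)^(i+1) * I (i+1)
  have step3 : ∀ i ∈ range (p-1), (-3:ZMod p)^(i+1) * I (i+1)
      = (-3:ZMod p)^(i+1) * (((i+1 : ℕ)) : ZMod p)⁻¹ * (((p-1).choose (2*(i+1)) : ℕ) : ZMod p) := by
    intro i hi
    simp only [mem_range] at hi
    rw [stepI (i+1) (by omega) (by omega)]
    ring
  rw [Finset.sum_congr rfl step3]
  -- restrict to range m
  rw [← Finset.sum_subset (by
      intro x hx; simp only [mem_range] at *; omega : range m ⊆ range (p-1))
    (by
      intro i hi hi'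
      simp only [mem_range] at hi hi'
      rw [Nat.choose_eq_zero_of_lt (by omega : p - 1 < 2*(i+1))]
      push_cast
      ring)]
  -- evaluate each term
  have step4 : ∀ i ∈ range m, (-3:ZMod p)^(i+1) * (((i+1 : ℕ)) : ZMod p)⁻¹
        * (((p-1).choose (2*(i+1)) : ℕ) : ZMod p)
      = -2 * ((c (i+1) : ℕ) : ZMod p) * (-3:ZMod p)^(i+1) := by
    intro i hi
    simp only [mem_range] at hi
    rw [choose_psub1 hpp _ (by omega), invFormula hpp (by omega) (by omega : i+1 ≤ (p-1)/2)]
    rw [show ((-1 : ZMod p))^(2*(i+1)) = 1 from by rw [pow_mul]; norm_num]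
    rw [hc]
    ring
  rw [Finset.sum_congr rfl step4]
  -- integer identity
  set Q : ℤ := ∑ i ∈ range m, (c (i+1) : ℤ) * (-3)^(i+1) with hQ
  have hpQ : (p : ℤ) * Q = 2^(p-1) - 1 := by
    have hpc : ∀ i ∈ range m, (p : ℤ) * ((c (i+1) : ℤ) * (-3)^(i+1))
        = (p.choose (2*(i+1)) : ℤ) * (-3)^(i+1) := by
      intro i hi
      simp only [mem_range] at hi
      have hd : p ∣ p.choose (2*(i+1)) :=
        Nat.Prime.dvd_choose_self hpp (by omega) (by omega)
      have : (p : ℤ) * (c (i+1) : ℤ) = (p.choose (2*(i+1)) : ℤ) := by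
        rw [hc]
        exact_mod_cast congrArg (Nat.cast : ℕ → ℤ) (Nat.mul_div_cancel' hd)
      rw [← mul_assoc, this]
    rw [hQ, Finset.mul_sum, Finset.sum_congr rfl hpc]
    have hb := even_binom_sum p hpp hp hp3
    rw [Finset.sum_range_succ'] at hb
    simp only [mul_zero, Nat.choose_zero_right, pow_zero, mul_one, Nat.cast_one] at hb
    rw [← hm] at hb
    linarith [hb]
  have hQval : ((2:ℤ)^(p-1) - 1) / (p : ℤ) = Q := by
    apply Int.ediv_eq_of_eq_mul_left
    · exact_mod_cast Nat.Prime.ne_zero hpp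
    · linarith [hpQ]
  rw [show ((2:ℤ)^(p-1) - 1) / (p : ℤ) = Q from hQval]
  have : ∑ i ∈ range m, -2 * ((c (i+1) : ℕ) : ZMod p) * (-3:ZMod p)^(i+1)
      = -2 * ((Q : ℤ) : ZMod p) := by
    rw [hQ]
    push_cast
    rw [Finset.mul_sum]
    apply Finset.sum_congr rfl
    intro i _
    ring
  rw [this]
end

section
/- Let p be an odd prime. Then $\sum_{k=1}^{p-1} \frac{D_k(-4)}{k} \equiv \frac{3-3^p}{p} \pmod{p}$, where $1/k$ denotes the inverse of k mod p and $(3-3^p)/p$ is an integer by Fermat's little theorem. -/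
open Finset Nat Polynomial

section Aux

variable {p : ℕ} [hpp : Fact p.Prime]

lemma castDescFactorial {R : Type*} [CommRing R] (n k : ℕ) :
    (n.descFactorial k : R) = ∏ i ∈ range k, ((n : R) - (i : R)) := by
  rcases le_or_gt k n with h | h
  · rw [Nat.descFactorial_eq_prod_range, Nat.cast_prod]
    refine Finset.prod_congr rfl fun i hi => ?_
    rw [Nat.cast_sub (le_trans (Nat.le_of_lt_succ (Nat.lt_succ_of_lt (mem_range.mp hi))) h)]
  · rw [Nat.descFactorial_eq_zero_iff_lt.mpr h, Nat.cast_zero]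
    refine (Finset.prod_eq_zero (mem_range.mpr h) ?_).symm
    simp

lemma cast_factorial_prod {R : Type*} [CommRing R] (n : ℕ) :
    ∏ i ∈ range n, ((i : R) + 1) = (n ! : R) := by
  induction n with
  | zero => simp
  | succ n ih => rw [prod_range_succ, ih, Nat.factorial_succ]; push_cast; ring

-- the constant term product
lemma prodG {R : Type*} [CommRing R] (j : ℕ) (hj : 1 ≤ j) :
    ∏ i ∈ (range (2 * j)).erase j, ((j : R) - (i : ℕ))
      = (-1) ^ (j - 1) * (j ! : R) * ((j - 1)! : R) := by
  have hsplit : (range (2 * j)).erase j = range j ∪ Ico (j + 1) (2 * j) := by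
    ext i
    simp only [Finset.mem_erase, Finset.mem_range, Finset.mem_union, Finset.mem_Ico]
    omega
  have hdisj : Disjoint (range j) (Ico (j + 1) (2 * j)) := by
    rw [Finset.disjoint_left]
    intro a ha hb
    simp only [Finset.mem_range] at ha
    simp only [Finset.mem_Ico] at hb
    omega
  rw [hsplit, Finset.prod_union hdisj]
  have hP1 : ∏ i ∈ range j, ((j : R) - (i : ℕ)) = (j ! : R) := by
    rw [← Finset.prod_range_reflect]
    rw [← cast_factorial_prod]
    refine Finset.prod_congr rfl fun i hi => ?_
    rw [mem_range] at hi
    have h1 : ((j - 1 - i : ℕ) : R) = (j : R) - 1 - (i : R) := by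
      have : (j - 1 - i) + (i + 1) = j := by omega
      have hc := congrArg (fun t : ℕ => (t : R)) this
      push_cast at hc
      linear_combination hc
    rw [h1]
    ring
  have hP2 : ∏ i ∈ Ico (j + 1) (2 * j), ((j : R) - (i : ℕ))
      = (-1) ^ (j - 1) * ((j - 1)! : R) := by
    rw [Finset.prod_Ico_eq_prod_range]
    have hlen : 2 * j - (j + 1) = j - 1 := by omega
    rw [hlen]
    have : ∀ i ∈ range (j - 1), ((j : R) - ((j + 1 + i : ℕ) : R)) = -(((i : R) + 1)) := by
      intro i _
      push_cast
      ring
    rw [Finset.prod_congr rfl this]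
    have h2 : ∏ x ∈ range (j - 1), -((x : R) + 1)
        = ∏ x ∈ range (j - 1), ((-1 : R) * ((x : R) + 1)) :=
      Finset.prod_congr rfl fun x _ => by ring
    rw [h2, Finset.prod_mul_distrib, Finset.prod_const, card_range, cast_factorial_prod]
  rw [hP1, hP2]
  ring

lemma sum_poly_eval (p : ℕ) [Fact p.Prime] (P : Polynomial (ZMod p))
    (h : P.natDegree < p - 1) : ∑ x : ZMod p, P.eval x = 0 := by
  have : ∀ x : ZMod p, P.eval x = ∑ i ∈ range (P.natDegree + 1), P.coeff i * x ^ i := by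
    intro x; rw [eval_eq_sum_range]
  simp_rw [this]
  rw [Finset.sum_comm]
  refine Finset.sum_eq_zero fun i hi => ?_
  rw [← Finset.mul_sum]
  have : ∑ x : ZMod p, x ^ i = 0 := by
    have := FiniteField.sum_pow_lt_card_sub_one (K := ZMod p) i ?_
    · exact this
    · rw [ZMod.card]
      exact lt_of_le_of_lt (Nat.le_of_lt_succ (mem_range.mp hi)) h
  rw [this, mul_zero]

lemma sum_Icc_cast (f : ZMod p → ZMod p) :
    ∑ k ∈ Icc 1 (p - 1), f (k : ZMod p) = (∑ x : ZMod p, f x) - f 0 := by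
  have hp : 2 ≤ p := (Fact.out : p.Prime).two_le
  have h1 : ∑ k ∈ Icc 1 (p - 1), f (k : ZMod p) = ∑ x ∈ Finset.univ.erase (0 : ZMod p), f x := by
    refine Finset.sum_nbij' (fun k => (k : ZMod p)) (fun x => x.val) ?_ ?_ ?_ ?_ ?_
    · intro k hk
      rw [mem_Icc] at hk
      refine Finset.mem_erase.mpr ⟨?_, Finset.mem_univ _⟩
      intro h
      rw [ZMod.natCast_eq_zero_iff] at h
      have := Nat.le_of_dvd (by omega) h
      omega
    · intro x hx
      rw [Finset.mem_erase] at hx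
      have h1 : x.val ≠ 0 := fun h => hx.1 (by rwa [← ZMod.val_eq_zero])
      have h2 : x.val < p := x.val_lt
      simp only [mem_Icc]
      omega
    · intro k hk
      rw [mem_Icc] at hk
      exact ZMod.val_cast_of_lt (by omega)
    · intro x _
      exact ZMod.natCast_zmod_val x
    · intros; rfl
  rw [h1, ← Finset.add_sum_erase _ f (Finset.mem_univ (0 : ZMod p))]
  ring

lemma sum_univ_zmod (hp : Odd p) : ∑ x : ZMod p, x = 0 := by
  have h : ∑ x : ZMod p, x = ∑ x : ZMod p, -x :=
    Fintype.sum_equiv (Equiv.neg (ZMod p)) (fun x => x) (fun x => -x) (fun x => by simp)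
  have h2 : (∑ x : ZMod p, x) + (∑ x : ZMod p, x) = 0 := by
    nth_rewrite 2 [h]
    rw [← Finset.sum_add_distrib]
    simp
  have h2' : (2 : ZMod p) * (∑ x : ZMod p, x) = 0 := by rw [two_mul]; exact h2
  have hp2 : p ≠ 2 := by rintro rfl; exact (by decide : ¬ Odd 2) hp
  have h2ne : (2 : ZMod p) ≠ 0 := by
    intro hc
    have : ((2 : ℕ) : ZMod p) = 0 := by exact_mod_cast hc
    rw [ZMod.natCast_eq_zero_iff] at this
    have := (Nat.prime_dvd_prime_iff_eq (Fact.out : p.Prime) Nat.prime_two).mp this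
    exact hp2 this
  exact (mul_eq_zero.mp h2').resolve_left h2ne

lemma sum_inv_zmod (hp : Odd p) : ∑ k ∈ Icc 1 (p - 1), (k : ZMod p)⁻¹ = 0 := by
  rw [sum_Icc_cast (fun x => x⁻¹)]
  simp only [inv_zero, sub_zero]
  have : ∑ x : ZMod p, x⁻¹ = ∑ x : ZMod p, x :=
    Fintype.sum_equiv (Equiv.inv (ZMod p)) (fun x => x⁻¹) (fun x => x) (fun x => by simp)
  rw [this, sum_univ_zmod hp]

lemma choose_trinomial (j k : ℕ) :
    k.choose j * (k + j).choose j = (2 * j).choose j * (k + j).choose (2 * j) := by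
  rcases le_or_gt j k with h | h
  · have h1 : k.choose j * j ! * (k - j)! = k ! := Nat.choose_mul_factorial_mul_factorial h
    have h2 : (k + j).choose j * j ! * k ! = (k + j)! := by
      have := Nat.choose_mul_factorial_mul_factorial (show j ≤ k + j by omega)
      rwa [Nat.add_sub_cancel] at this
    have h3 : (2 * j).choose j * j ! * j ! = (2 * j)! := by
      have := Nat.choose_mul_factorial_mul_factorial (show j ≤ 2 * j by omega)
      rwa [show 2 * j - j = j by omega] at this
    have h4 : (k + j).choose (2 * j) * (2 * j)! * (k - j)! = (k + j)! := by
      have := Nat.choose_mul_factorial_mul_factorial (show 2 * j ≤ k + j by omega)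
      rwa [show k + j - 2 * j = k - j by omega] at this
    have key : (k.choose j * (k + j).choose j) * (j ! * (k - j)! * (j ! * k !)) =
        ((2 * j).choose j * (k + j).choose (2 * j)) * (j ! * (k - j)! * (j ! * k !)) := by
      calc (k.choose j * (k + j).choose j) * (j ! * (k - j)! * (j ! * k !))
          = (k.choose j * j ! * (k - j)!) * ((k + j).choose j * j ! * k !) := by ring
        _ = k ! * (k + j)! := by rw [h1, h2]
        _ = k ! * ((k + j).choose (2 * j) * (2 * j)! * (k - j)!) := by rw [h4]
        _ = ((2 * j).choose j * j ! * j !) * ((k + j).choose (2 * j)) * (k - j)! * k ! := by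
              rw [h3]; ring
        _ = ((2 * j).choose j * (k + j).choose (2 * j)) * (j ! * (k - j)! * (j ! * k !)) := by
              ring
    exact Nat.eq_of_mul_eq_mul_right (by positivity) key
  · rw [Nat.choose_eq_zero_of_lt h, Nat.choose_eq_zero_of_lt (show k + j < 2 * j by omega)]
    ring

lemma choose_p_sub_one (i : ℕ) (hi : i < p) : (((p - 1).choose i : ℕ) : ZMod p) = (-1) ^ i := by
  induction i with
  | zero => simp
  | succ n ih =>
    have hn : n < p := by omega
    have hpas : (p - 1).choose n + (p - 1).choose (n + 1) = p.choose (n + 1) := by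
      have := Nat.choose_succ_succ (p - 1) n
      have hp1 : p - 1 + 1 = p := by have := hpp.out.two_le; omega
      simp only [Nat.succ_eq_add_one] at this
      rw [hp1] at this
      omega
    have hdvd : (p : ℕ) ∣ p.choose (n + 1) :=
      hpp.out.dvd_choose_self (by omega) (by omega)
    have hz : ((p.choose (n + 1) : ℕ) : ZMod p) = 0 := by
      rw [ZMod.natCast_eq_zero_iff]; exact hdvd
    have : (((p - 1).choose n : ℕ) : ZMod p) + ((p - 1).choose (n + 1) : ZMod p) = 0 := by
      rw [← Nat.cast_add, hpas, hz]
    rw [ih hn] at this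
    have : (((p - 1).choose (n + 1) : ℕ) : ZMod p) = -((-1) ^ n) := by linear_combination this
    rw [this, pow_succ]
    ring

lemma inv_eq_choose_div (j : ℕ) (hj1 : 1 ≤ j) (hj2 : 2 * j < p) :
    ((j : ZMod p))⁻¹ = -2 * ((p.choose (2 * j) / p : ℕ) : ZMod p) := by
  have hpp' := hpp.out
  have hdvd : p ∣ p.choose (2 * j) := hpp'.dvd_choose_self (by omega) (by omega)
  -- (2j) * C(p, 2j) = p * C(p-1, 2j-1)
  have hkey : 2 * j * p.choose (2 * j) = p * (p - 1).choose (2 * j - 1) := by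
    have := Nat.add_one_mul_choose_eq (p - 1) (2 * j - 1)
    have hp1 : p - 1 + 1 = p := by have := hpp'.two_le; omega
    have hj1' : 2 * j - 1 + 1 = 2 * j := by omega
    rw [hp1, hj1'] at this
    rw [this]
    ring
  -- divide by p : 2j * (C(p,2j)/p) = C(p-1, 2j-1)
  have hdiv : 2 * j * (p.choose (2 * j) / p) = (p - 1).choose (2 * j - 1) := by
    have hp0 : 0 < p := hpp'.pos
    have : 2 * j * p.choose (2 * j) / p = (p - 1).choose (2 * j - 1) := by
      rw [hkey, Nat.mul_div_cancel_left _ hp0]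
    rw [← this, Nat.mul_div_assoc _ hdvd]
  -- cast to ZMod p
  have hcast : ((2 * j : ℕ) : ZMod p) * ((p.choose (2 * j) / p : ℕ) : ZMod p) = -1 := by
    rw [← Nat.cast_mul, hdiv, choose_p_sub_one _ (by omega)]
    rw [show (2 * j - 1 : ℕ) = 2 * (j - 1) + 1 by omega]
    rw [pow_succ, pow_mul]
    simp
  refine inv_eq_of_mul_eq_one_right ?_
  push_cast at hcast ⊢
  linear_combination -hcast

lemma evensum (hp : Odd p) :
    (2 : ℤ) * ∑ j ∈ Icc 1 ((p - 1) / 2), (p.choose (2 * j) : ℤ) * 4 ^ j = 3 ^ p - 3 := by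
  have hp2 : 2 ≤ p := hpp.out.two_le
  have e1 : ((2 : ℤ) + 1) ^ p = ∑ i ∈ range (p + 1), (2:ℤ) ^ i * 1 ^ (p - i) * (p.choose i) :=
    add_pow 2 1 p
  have e2 : ((-2 : ℤ) + 1) ^ p = ∑ i ∈ range (p + 1), (-2:ℤ) ^ i * 1 ^ (p - i) * (p.choose i) :=
    add_pow (-2) 1 p
  have hsum : (3 : ℤ) ^ p + (-1 : ℤ) ^ p
      = ∑ i ∈ range (p + 1), ((2 : ℤ) ^ i + (-2 : ℤ) ^ i) * (p.choose i) := by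
    rw [show (3:ℤ) = 2 + 1 by norm_num, e1, show ((-1:ℤ)) = -2 + 1 by norm_num, e2,
      ← Finset.sum_add_distrib]
    refine Finset.sum_congr rfl fun i _ => by ring
  have hzero : ∑ i ∈ (range (p + 1)).filter (fun i => ¬ Even i),
      ((2 : ℤ) ^ i + (-2 : ℤ) ^ i) * (p.choose i) = 0 := by
    refine Finset.sum_eq_zero fun i hi => ?_
    rw [Finset.mem_filter] at hi
    have hodd : Odd i := Nat.not_even_iff_odd.mp hi.2
    rw [Odd.neg_pow hodd]
    ring
  have hsplit : ∑ i ∈ range (p + 1), ((2 : ℤ) ^ i + (-2 : ℤ) ^ i) * (p.choose i)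
      = ∑ i ∈ (range (p + 1)).filter (fun i => Even i),
          ((2 : ℤ) ^ i + (-2 : ℤ) ^ i) * (p.choose i) := by
    rw [← Finset.sum_filter_add_sum_filter_not (range (p+1)) (fun i => Even i), hzero, add_zero]
  have hreindex : ∑ i ∈ (range (p + 1)).filter (fun i => Even i),
      ((2 : ℤ) ^ i + (-2 : ℤ) ^ i) * (p.choose i)
      = ∑ j ∈ range ((p - 1) / 2 + 1), (2 : ℤ) * 4 ^ j * (p.choose (2 * j) : ℤ) := by
    obtain ⟨t, ht⟩ := hp
    refine Finset.sum_nbij' (fun i => i / 2) (fun j => 2 * j) ?_ ?_ ?_ ?_ ?_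
    · intro i hi
      simp only [Finset.mem_filter, Finset.mem_range] at hi
      obtain ⟨s, hs⟩ := hi.2
      simp only [Finset.mem_range]
      omega
    · intro j hj
      simp only [Finset.mem_range] at hj
      simp only [Finset.mem_filter, Finset.mem_range]
      exact ⟨by omega, ⟨j, by ring⟩⟩
    · intro i hi
      simp only [Finset.mem_filter, Finset.mem_range] at hi
      obtain ⟨s, hs⟩ := hi.2
      omega
    · intro j _
      omega
    · intro i hi
      simp only [Finset.mem_filter, Finset.mem_range] at hi
      obtain ⟨s, hs⟩ := hi.2
      have h2 : 2 * (i / 2) = i := by omega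
      rw [h2]
      have hneg : ((-2 : ℤ)) ^ i = 2 ^ i := by
        rw [show i = 2 * (i/2) by omega, pow_mul, pow_mul]
        norm_num
      have h4 : (4 : ℤ) ^ (i / 2) = 2 ^ i := by
        rw [show (4:ℤ) = 2^2 by norm_num, ← pow_mul, h2]
      rw [hneg, h4]
      ring
  have hins : range ((p - 1) / 2 + 1) = insert 0 (Icc 1 ((p - 1) / 2)) := by
    ext i
    simp only [Finset.mem_range, Finset.mem_insert, Finset.mem_Icc]
    omega
  have hfinal : (3 : ℤ) ^ p + (-1 : ℤ) ^ p
      = 2 + ∑ j ∈ Icc 1 ((p - 1) / 2), (2 : ℤ) * 4 ^ j * (p.choose (2 * j) : ℤ) := by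
    rw [hsum, hsplit, hreindex, hins, Finset.sum_insert (by simp)]
    norm_num
  have hodd : (-1 : ℤ) ^ p = -1 := Odd.neg_one_pow hp
  rw [hodd] at hfinal
  rw [Finset.mul_sum]
  have : ∑ j ∈ Icc 1 ((p - 1) / 2), (2:ℤ) * ((p.choose (2 * j) : ℤ) * 4 ^ j)
      = ∑ j ∈ Icc 1 ((p - 1) / 2), (2 : ℤ) * 4 ^ j * (p.choose (2 * j) : ℤ) :=
    Finset.sum_congr rfl fun j _ => by ring
  rw [this]
  linarith [hfinal]

lemma stepD (hp : Odd p) :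
    ∑ j ∈ Icc 1 ((p - 1) / 2), (4 : ZMod p) ^ j * ((j : ZMod p))⁻¹
      = (((3 - 3 ^ p) / p : ℤ) : ZMod p) := by
  obtain ⟨t, ht⟩ := hp
  have hp2 : 2 ≤ p := hpp.out.two_le
  set m := (p - 1) / 2 with hm
  have h2m : 2 * m + 1 = p := by omega
  have hstep1 : ∑ j ∈ Icc 1 m, (4 : ZMod p) ^ j * ((j : ZMod p))⁻¹
      = ∑ j ∈ Icc 1 m, (4 : ZMod p) ^ j * (-2 * ((p.choose (2 * j) / p : ℕ) : ZMod p)) := by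
    refine Finset.sum_congr rfl fun j hj => ?_
    rw [mem_Icc] at hj
    rw [inv_eq_choose_div j hj.1 (by omega)]
  set N : ℕ := ∑ j ∈ Icc 1 m, (p.choose (2 * j) / p) * 4 ^ j with hN
  have hcastN : ∑ j ∈ Icc 1 m, (4 : ZMod p) ^ j * (-2 * ((p.choose (2 * j) / p : ℕ) : ZMod p))
      = -2 * (N : ZMod p) := by
    rw [hN, Nat.cast_sum, Finset.mul_sum]
    refine Finset.sum_congr rfl fun j hj => ?_
    push_cast
    ring
  have hdvd : ∀ j ∈ Icc 1 m, p ∣ p.choose (2 * j) := by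
    intro j hj
    rw [mem_Icc] at hj
    exact hpp.out.dvd_choose_self (by omega) (by omega)
  have hpN : (p : ℤ) * (2 * N) = 3 ^ p - 3 := by
    have hnat : p * N = ∑ j ∈ Icc 1 m, p.choose (2 * j) * 4 ^ j := by
      rw [hN, Finset.mul_sum]
      refine Finset.sum_congr rfl fun j hj => ?_
      rw [← Nat.mul_assoc, Nat.mul_div_cancel' (hdvd j hj)]
    have hcast : ((p * N : ℕ) : ℤ) = ∑ j ∈ Icc 1 m, (p.choose (2 * j) : ℤ) * 4 ^ j := by
      rw [hnat]
      push_cast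
      rfl
    have := evensum (p := p) ⟨t, by omega⟩
    rw [← hm] at this
    push_cast at hcast
    linarith [this, hcast]
  have hdiv : ((3 - 3 ^ p) / p : ℤ) = -(2 * N) := by
    have h1 : (3 - 3 ^ p : ℤ) = (p : ℤ) * (-(2 * N)) := by linarith [hpN]
    rw [h1, Int.mul_ediv_cancel_left _ (by exact_mod_cast hpp.out.pos.ne')]
  rw [hstep1, hcastN, hdiv]
  push_cast
  ring

lemma inner_sum2 (j : ℕ) (hj1 : 1 ≤ j) (hj2 : 2 * j < p) :
    ((2 * j)! : ZMod p) * ∑ k ∈ Icc 1 (p - 1), (((k + j).choose (2 * j) : ℕ) : ZMod p) * (k : ZMod p)⁻¹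
      = (-1) ^ j * (j ! : ZMod p) * ((j - 1)! : ZMod p) := by
  have hp2 : 2 ≤ p := hpp.out.two_le
  set Q : Polynomial (ZMod p) :=
    ∏ i ∈ (range (2 * j)).erase j, (X + Polynomial.C ((j : ZMod p) - (i : ℕ))) with hQ
  have hQeval : ∀ x : ZMod p, Q.eval x = ∏ i ∈ (range (2 * j)).erase j, (x + ((j : ZMod p) - (i : ℕ))) := by
    intro x
    rw [hQ, Polynomial.eval_prod]
    refine Finset.prod_congr rfl fun i _ => by simp
  have hjmem : j ∈ range (2 * j) := mem_range.mpr (by omega)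
  -- pointwise identity
  have hpoint : ∀ k ∈ Icc 1 (p - 1),
      (((2 * j)!  : ℕ) : ZMod p) * (((k + j).choose (2 * j) : ℕ) : ZMod p) * (k : ZMod p)⁻¹
        = Q.eval ((k : ℕ) : ZMod p) := by
    intro k hk
    rw [mem_Icc] at hk
    have hkne : ((k : ℕ) : ZMod p) ≠ 0 := by
      intro h
      rw [ZMod.natCast_eq_zero_iff] at h
      have := Nat.le_of_dvd (by omega) h
      omega
    have hdesc : (((k + j).descFactorial (2 * j) : ℕ) : ZMod p)
        = ∏ i ∈ range (2 * j), (((k : ℕ) : ZMod p) + (j : ZMod p) - (i : ℕ)) := by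
      rw [castDescFactorial]
      refine Finset.prod_congr rfl fun i _ => by push_cast; ring
    have hfac : (((k + j).descFactorial (2 * j) : ℕ) : ZMod p)
        = (((2 * j)! : ℕ) : ZMod p) * (((k + j).choose (2 * j) : ℕ) : ZMod p) := by
      rw [Nat.descFactorial_eq_factorial_mul_choose]
      push_cast
      ring
    have hext : ∏ i ∈ range (2 * j), (((k : ℕ) : ZMod p) + (j : ZMod p) - (i : ℕ))
        = ((k : ℕ) : ZMod p) * Q.eval ((k : ℕ) : ZMod p) := by
      rw [← Finset.mul_prod_erase _ _ hjmem, hQeval]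
      have h1 : (((k : ℕ) : ZMod p) + (j : ZMod p) - ((j : ℕ) : ZMod p)) = ((k : ℕ) : ZMod p) := by
        ring
      rw [h1]
      refine congrArg _ (Finset.prod_congr rfl fun i _ => by ring)
    rw [← hfac, hdesc, hext]
    rw [mul_assoc, mul_comm (Q.eval _), ← mul_assoc, mul_inv_cancel₀ hkne, one_mul]
  -- sum it
  rw [Finset.mul_sum]
  have hsum1 : ∑ k ∈ Icc 1 (p - 1),
      (((2 * j)! : ℕ) : ZMod p) * ((((k + j).choose (2 * j) : ℕ) : ZMod p) * (k : ZMod p)⁻¹)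
      = ∑ k ∈ Icc 1 (p - 1), Q.eval ((k : ℕ) : ZMod p) := by
    refine Finset.sum_congr rfl fun k hk => ?_
    rw [← hpoint k hk]; ring
  rw [hsum1, sum_Icc_cast (fun x => Q.eval x)]
  have hdeg : Q.natDegree < p - 1 := by
    have h1 : Q.natDegree ≤ ∑ i ∈ (range (2 * j)).erase j,
        (X + Polynomial.C ((j : ZMod p) - (i : ℕ))).natDegree := Polynomial.natDegree_prod_le _ _
    have h2 : ∑ i ∈ (range (2 * j)).erase j,
        (X + Polynomial.C ((j : ZMod p) - (i : ℕ))).natDegree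
        = ∑ i ∈ (range (2 * j)).erase j, 1 := by
      refine Finset.sum_congr rfl fun i _ => Polynomial.natDegree_X_add_C _
    rw [h2, Finset.sum_const, smul_eq_mul, mul_one, Finset.card_erase_of_mem hjmem,
      Finset.card_range] at h1
    omega
  rw [sum_poly_eval p Q hdeg, zero_sub]
  have hQ0 : Q.eval 0 = (-1) ^ (j - 1) * (j ! : ZMod p) * ((j - 1)! : ZMod p) := by
    rw [hQeval 0]
    rw [← prodG j hj1]
    exact Finset.prod_congr rfl fun i _ => by ring
  rw [hQ0]
  have hjj : j = (j - 1) + 1 := by omega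
  rw [show (-1 : ZMod p) ^ j = (-1) ^ ((j - 1) + 1) by rw [← hjj]]
  rw [pow_succ]
  ring

lemma perj (j : ℕ) (hj1 : 1 ≤ j) (hj2 : 2 * j < p) :
    (((2 * j).choose j : ℕ) : ZMod p) * (-4) ^ j
        * ∑ k ∈ Icc 1 (p - 1), (((k + j).choose (2 * j) : ℕ) : ZMod p) * (k : ZMod p)⁻¹
      = 4 ^ j * ((j : ℕ) : ZMod p)⁻¹ := by
  have hfacne : (((2 * j)! : ℕ) : ZMod p) ≠ 0 := by
    intro h
    rw [ZMod.natCast_eq_zero_iff] at h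
    have := (Nat.Prime.dvd_factorial hpp.out).mp h
    omega
  have hjne : ((j : ℕ) : ZMod p) ≠ 0 := by
    intro h
    rw [ZMod.natCast_eq_zero_iff] at h
    have := Nat.le_of_dvd (by omega) h
    omega
  have hchoose : (((2 * j).choose j : ℕ) : ZMod p) * (j ! : ZMod p) * (j ! : ZMod p)
      = (((2 * j)! : ℕ) : ZMod p) := by
    have := Nat.choose_mul_factorial_mul_factorial (show j ≤ 2 * j by omega)
    rw [show 2 * j - j = j by omega] at this
    exact_mod_cast congrArg (fun t : ℕ => (t : ZMod p)) this
  have hmulfac : ((j : ℕ) : ZMod p) * ((j - 1)! : ZMod p) = (j ! : ZMod p) := by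
    exact_mod_cast congrArg (fun t : ℕ => (t : ZMod p)) (Nat.mul_factorial_pred (by omega))
  refine mul_left_cancel₀ hfacne ?_
  rw [show (((2 * j)! : ℕ) : ZMod p) * ((((2 * j).choose j : ℕ) : ZMod p) * (-4) ^ j
        * ∑ k ∈ Icc 1 (p - 1), (((k + j).choose (2 * j) : ℕ) : ZMod p) * (k : ZMod p)⁻¹)
      = (((2 * j).choose j : ℕ) : ZMod p) * (-4) ^ j
        * ((((2 * j)! : ℕ) : ZMod p)
          * ∑ k ∈ Icc 1 (p - 1), (((k + j).choose (2 * j) : ℕ) : ZMod p) * (k : ZMod p)⁻¹) by ring]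
  rw [inner_sum2 j hj1 hj2]
  refine mul_left_cancel₀ hjne ?_
  have hneg : ((-4 : ZMod p)) ^ j * (-1 : ZMod p) ^ j = 4 ^ j := by
    rw [← mul_pow]
    norm_num
  calc ((j : ℕ) : ZMod p) * ((((2 * j).choose j : ℕ) : ZMod p) * (-4) ^ j
          * ((-1) ^ j * (j ! : ZMod p) * ((j - 1)! : ZMod p)))
      = ((((2 * j).choose j : ℕ) : ZMod p) * (j ! : ZMod p)
          * (((j : ℕ) : ZMod p) * ((j - 1)! : ZMod p))) * ((-4) ^ j * (-1) ^ j) := by ring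
    _ = ((((2 * j).choose j : ℕ) : ZMod p) * (j ! : ZMod p) * (j ! : ZMod p)) * (4 ^ j) := by
          rw [hmulfac, hneg]
    _ = (((2 * j)! : ℕ) : ZMod p) * 4 ^ j := by rw [hchoose]
    _ = ((j : ℕ) : ZMod p) * ((((2 * j)! : ℕ) : ZMod p) * (4 ^ j * ((j : ℕ) : ZMod p)⁻¹)) := by
          rw [show ((j : ℕ) : ZMod p) * ((((2 * j)! : ℕ) : ZMod p) * (4 ^ j * ((j : ℕ) : ZMod p)⁻¹))
              = (((2 * j)! : ℕ) : ZMod p) * 4 ^ j * (((j : ℕ) : ZMod p) * ((j : ℕ) : ZMod p)⁻¹) by ring,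
            mul_inv_cancel₀ hjne, mul_one]

end Aux

theorem sun_1_5 (p : ℕ) [Fact p.Prime] (hp : Odd p) :
    ∑ k ∈ Finset.Icc 1 (p - 1), (delannoyPoly k (-4) : ZMod p) * (k : ZMod p)⁻¹ =
      (((3 - 3 ^ p) / p : ℤ) : ZMod p) := by
  obtain ⟨t, ht⟩ := hp
  have hpp : Fact p.Prime := inferInstance
  have hp2 : 2 ≤ p := hpp.out.two_le
  set m := (p - 1) / 2 with hm
  -- Step 1: expand delannoyPoly and extend the index range to `range p`
  have hD : ∀ k ∈ Icc 1 (p - 1), ((delannoyPoly k (-4) : ℤ) : ZMod p)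
      = ∑ j ∈ range p,
          ((k.choose j : ℕ) : ZMod p) * (((k + j).choose j : ℕ) : ZMod p) * (-4) ^ j := by
    intro k hk
    rw [mem_Icc] at hk
    have h1 : ((delannoyPoly k (-4) : ℤ) : ZMod p)
        = ∑ j ∈ range (k + 1),
            ((k.choose j : ℕ) : ZMod p) * (((k + j).choose j : ℕ) : ZMod p) * (-4) ^ j := by
      rw [delannoyPoly]
      push_cast
      rfl
    rw [h1]
    refine Finset.sum_subset ?_ ?_
    · intro x hx
      rw [mem_range] at hx ⊢
      omega
    · intro x hx hnx
      rw [mem_range] at hx hnx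
      rw [Nat.choose_eq_zero_of_lt (show k < x by omega)]
      simp
  have hS1 : ∑ k ∈ Finset.Icc 1 (p - 1), (delannoyPoly k (-4) : ZMod p) * (k : ZMod p)⁻¹
      = ∑ j ∈ range p, ∑ k ∈ Icc 1 (p - 1),
          ((k.choose j : ℕ) : ZMod p) * (((k + j).choose j : ℕ) : ZMod p) * (-4) ^ j
            * (k : ZMod p)⁻¹ := by
    rw [← Finset.sum_comm]
    refine Finset.sum_congr rfl fun k hk => ?_
    rw [hD k hk, Finset.sum_mul]
  rw [hS1]
  -- Step 2: trinomial revision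
  have hS2 : ∀ j ∈ range p, ∑ k ∈ Icc 1 (p - 1),
        ((k.choose j : ℕ) : ZMod p) * (((k + j).choose j : ℕ) : ZMod p) * (-4) ^ j
          * (k : ZMod p)⁻¹
      = (((2 * j).choose j : ℕ) : ZMod p) * (-4) ^ j
          * ∑ k ∈ Icc 1 (p - 1), (((k + j).choose (2 * j) : ℕ) : ZMod p) * (k : ZMod p)⁻¹ := by
    intro j _
    rw [Finset.mul_sum]
    refine Finset.sum_congr rfl fun k _ => ?_
    have h2 : ((k.choose j : ℕ) : ZMod p) * (((k + j).choose j : ℕ) : ZMod p)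
        = (((2 * j).choose j : ℕ) : ZMod p) * (((k + j).choose (2 * j) : ℕ) : ZMod p) := by
      exact_mod_cast congrArg (fun t : ℕ => (t : ZMod p)) (choose_trinomial j k)
    calc ((k.choose j : ℕ) : ZMod p) * (((k + j).choose j : ℕ) : ZMod p) * (-4) ^ j
            * (k : ZMod p)⁻¹
        = (((k.choose j : ℕ) : ZMod p) * (((k + j).choose j : ℕ) : ZMod p)) * ((-4) ^ j
            * (k : ZMod p)⁻¹) := by ring
      _ = ((((2 * j).choose j : ℕ) : ZMod p) * (((k + j).choose (2 * j) : ℕ) : ZMod p))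
            * ((-4) ^ j * (k : ZMod p)⁻¹) := by rw [h2]
      _ = (((2 * j).choose j : ℕ) : ZMod p) * (-4) ^ j
            * ((((k + j).choose (2 * j) : ℕ) : ZMod p) * (k : ZMod p)⁻¹) := by ring
  rw [Finset.sum_congr rfl hS2]
  -- Step 3: restrict the j-range to Icc 1 m
  have hsub : Icc 1 m ⊆ range p := by
    intro x hx
    rw [mem_Icc] at hx
    rw [mem_range]
    omega
  rw [← Finset.sum_subset hsub ?vanish]
  · -- Step 4: per-j evaluation and final sum
    have : ∀ j ∈ Icc 1 m, (((2 * j).choose j : ℕ) : ZMod p) * (-4) ^ j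
          * ∑ k ∈ Icc 1 (p - 1), (((k + j).choose (2 * j) : ℕ) : ZMod p) * (k : ZMod p)⁻¹
        = (4 : ZMod p) ^ j * ((j : ZMod p))⁻¹ := by
      intro j hj
      rw [mem_Icc] at hj
      exact perj j hj.1 (by omega)
    rw [Finset.sum_congr rfl this]
    exact stepD ⟨t, ht⟩
  case vanish =>
    intro j hj hnj
    rw [mem_range] at hj
    rw [mem_Icc] at hnj
    rcases Nat.eq_zero_or_pos j with h0 | h1
    · subst h0
      have he : ∀ k ∈ Icc 1 (p - 1),
          (((k + 0).choose (2 * 0) : ℕ) : ZMod p) * (k : ZMod p)⁻¹ = (k : ZMod p)⁻¹ := by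
        intro k _
        norm_num
      rw [Finset.sum_congr rfl he, sum_inv_zmod ⟨t, ht⟩]
      ring
    · -- j > m, so p ≤ 2j and p ∣ C(2j, j)
      have hples : p ≤ 2 * j := by omega
      have hdvd : p ∣ (2 * j).choose j :=
        hpp.out.dvd_choose (show j < p by omega) (show 2 * j - j < p by omega) hples
      have : (((2 * j).choose j : ℕ) : ZMod p) = 0 := by
        rw [ZMod.natCast_eq_zero_iff]; exact hdvd
      rw [this]
      ring
end

section
/- Let p be an odd prime. Then $\sum_{k=1}^{p-1} \frac{D_k(-2)}{k} \equiv -\frac{4}{p} P_{p-(\frac{2}{p})} \pmod{p}$, where $1/k$ denotes the inverse of k mod p and $P_{p-(\frac{2}{p})}$ is divisible by p. -/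
/-- The Pell numbers: `P 0 = 0`, `P 1 = 1`, `P (n+2) = 2 * P (n+1) + P n`. -/
def pellNum : ℕ → ℤ
  | 0 => 0
  | 1 => 1
  | (n + 2) => 2 * pellNum (n + 1) + pellNum n

open Finset

namespace Sun

def wq (k : ℕ) : ℤ := if Even k then 2^(k/2) else 0
def vq (k : ℕ) : ℤ := if Even k then 0 else 2^(k/2)

def qell : ℕ → ℤ
  | 0 => 1
  | 1 => 1
  | (n + 2) => 2 * qell (n + 1) + qell n

lemma wq_succ (k : ℕ) : wq (k+1) = 2 * vq k := by
  rcases Nat.even_or_odd k with h | h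
  · have h1 : ¬ Even (k+1) := by simp [Nat.even_add_one, h]
    simp [wq, vq, h, h1]
  · have hk : k % 2 = 1 := Nat.odd_iff.mp h
    have h0 : ¬ Even k := by simp [Nat.even_iff, hk]
    have h1 : Even (k+1) := by simp [Nat.even_add_one, h0]
    have h2 : (k+1)/2 = k/2 + 1 := by omega
    simp [wq, vq, h0, h1, h2, pow_succ, mul_comm]

lemma vq_succ (k : ℕ) : vq (k+1) = wq k := by
  rcases Nat.even_or_odd k with h | h
  · have hk : k % 2 = 0 := Nat.even_iff.mp h
    have h1 : ¬ Even (k+1) := by simp [Nat.even_add_one, h]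
    have h2 : (k+1)/2 = k/2 := by omega
    simp [wq, vq, h, h1, h2]
  · have hk : k % 2 = 1 := Nat.odd_iff.mp h
    have h0 : ¬ Even k := by simp [Nat.even_iff, hk]
    have h1 : Even (k+1) := by simp [Nat.even_add_one, h0]
    simp [wq, vq, h0, h1]

lemma qell_pell_succ (n : ℕ) :
    qell (n+1) = qell n + 2 * pellNum n ∧ pellNum (n+1) = qell n + pellNum n := by
  induction n with
  | zero => simp [qell, pellNum]
  | succ n ih =>
    have h1 : qell (n+2) = 2 * qell (n+1) + qell n := rfl
    have h2 : pellNum (n+2) = 2 * pellNum (n+1) + pellNum n := rfl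
    constructor
    · rw [h1]; omega
    · rw [h2]; omega

lemma sqrtd_pow (k : ℕ) : (Zsqrtd.sqrtd : ℤ√2)^k = ⟨wq k, vq k⟩ := by
  induction k with
  | zero => simp [wq, vq]; rfl
  | succ k ih =>
    rw [pow_succ, ih, wq_succ, vq_succ]
    ext <;> simp [Zsqrtd.re_mul, Zsqrtd.im_mul, Zsqrtd.re_sqrtd, Zsqrtd.im_sqrtd]

lemma alpha_pow (n : ℕ) : ((⟨1,1⟩ : ℤ√2))^n = ⟨qell n, pellNum n⟩ := by
  induction n with
  | zero => simp [qell]; rfl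
  | succ n ih =>
    rw [pow_succ, ih]
    have h := qell_pell_succ n
    ext
    · simp [Zsqrtd.re_mul, h.1, h.2]
    · simp [Zsqrtd.im_mul, h.1, h.2]

def reHom : ℤ√2 →+ ℤ := { toFun := Zsqrtd.re, map_zero' := rfl, map_add' := fun _ _ => rfl }
def imHom : ℤ√2 →+ ℤ := { toFun := Zsqrtd.im, map_zero' := rfl, map_add' := fun _ _ => rfl }
lemma reHom_apply (x : ℤ√2) : reHom x = x.re := rfl
lemma imHom_apply (x : ℤ√2) : imHom x = x.im := rfl

lemma qell_pell_eq_sum (p : ℕ) :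
    qell p = ∑ k ∈ range (p+1), (p.choose k : ℤ) * wq k ∧
    pellNum p = ∑ k ∈ range (p+1), (p.choose k : ℤ) * vq k := by
  have h : ((⟨1,1⟩ : ℤ√2))^p = ∑ k ∈ range (p+1), ((p.choose k : ℤ)) • (Zsqrtd.sqrtd : ℤ√2)^k := by
    have h0 : ((⟨1,1⟩ : ℤ√2)) = Zsqrtd.sqrtd + 1 := by ext <;> simp
    rw [h0, add_pow]
    refine Finset.sum_congr rfl fun k _ => ?_
    simp [zsmul_eq_mul, mul_comm]
  rw [alpha_pow] at h
  constructor
  · have h1 := congrArg reHom h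
    rw [map_sum] at h1
    simpa [reHom_apply, sqrtd_pow, Zsqrtd.re_smul] using h1
  · have h1 := congrArg imHom h
    rw [map_sum] at h1
    simpa [imHom_apply, sqrtd_pow, Zsqrtd.im_smul] using h1


def gfd (n j m : ℕ) : ℤ :=
  ∑ k ∈ range (n+1), (-1)^k * (n.choose k : ℤ) * ((k+j).choose m : ℤ)

lemma gfd_rec (n j m : ℕ) : gfd (n+1) j (m+1) = - gfd n j m := by
  have pascal1 : ∀ k : ℕ, (((n+1)).choose (k+1) : ℤ) = (n.choose k : ℤ) + (n.choose (k+1) : ℤ) := by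
    intro k; exact_mod_cast Nat.choose_succ_succ n k
  have pascal2 : ∀ k : ℕ, ((k+1+j).choose (m+1) : ℤ) = ((k+j).choose m : ℤ) + ((k+j).choose (m+1) : ℤ) := by
    intro k
    have h : k+1+j = (k+j)+1 := by omega
    rw [h]; exact_mod_cast Nat.choose_succ_succ (k+j) m
  have h0 : ∑ k ∈ range (n+2), (-1:ℤ)^k * (n.choose k : ℤ) * ((k+j).choose (m+1) : ℤ)
      = gfd n j (m+1) := by
    rw [Finset.sum_range_succ]
    simp [gfd, Nat.choose_succ_self]
  have hB2 : (∑ k ∈ range (n+1), (-1:ℤ)^(k+1) * (n.choose (k+1) : ℤ) * ((k+1+j).choose (m+1) : ℤ))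
      = gfd n j (m+1) - (j.choose (m+1) : ℤ) := by
    have h5 := Finset.sum_range_succ' (fun k => (-1:ℤ)^k * (n.choose k : ℤ) * ((k+j).choose (m+1) : ℤ)) (n+1)
    rw [h0] at h5
    simp only [pow_zero, Nat.choose_zero_right, Nat.cast_one, one_mul, zero_add, mul_one] at h5
    linarith [h5]
  have hsplit : ∀ k ∈ range (n+1), (-1:ℤ)^(k+1) * (((n+1)).choose (k+1) : ℤ) * ((k+1+j).choose (m+1) : ℤ)
      = (-((-1:ℤ)^k * (n.choose k : ℤ) * ((k+j).choose m : ℤ)))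
        + ((-((-1:ℤ)^k * (n.choose k : ℤ) * ((k+j).choose (m+1) : ℤ)))
        + (-1:ℤ)^(k+1) * (n.choose (k+1) : ℤ) * ((k+1+j).choose (m+1) : ℤ)) := by
    intro k _
    rw [pascal1 k, pascal2 k]; ring
  show (∑ k ∈ range (n+1+1), (-1:ℤ)^k * (((n+1)).choose k : ℤ) * ((k+j).choose (m+1) : ℤ)) = - gfd n j m
  rw [Finset.sum_range_succ', Finset.sum_congr rfl hsplit, Finset.sum_add_distrib,
    Finset.sum_neg_distrib, Finset.sum_add_distrib, Finset.sum_neg_distrib, hB2]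
  have h6 : (∑ k ∈ range (n+1), (-1:ℤ)^k * (n.choose k : ℤ) * ((k+j).choose m : ℤ)) = gfd n j m := rfl
  have h7 : (∑ k ∈ range (n+1), (-1:ℤ)^k * (n.choose k : ℤ) * ((k+j).choose (m+1) : ℤ)) = gfd n j (m+1) := rfl
  rw [h6, h7]
  simp only [Nat.choose_zero_right, Nat.cast_one, mul_one]
  ring

lemma gfd_zero_right (n j : ℕ) (hn : 1 ≤ n) : gfd n j 0 = 0 := by
  have h : gfd n j 0 = ∑ k ∈ range (n+1), (-1:ℤ)^k * (n.choose k : ℤ) := by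
    simp [gfd]
  rw [h, Int.alternating_sum_range_choose, if_neg (by omega)]

lemma gfd_eq_of_le (j : ℕ) : ∀ n m : ℕ, n ≤ m → gfd n j m = (-1)^n * (j.choose (m-n) : ℤ) := by
  intro n
  induction n with
  | zero => intro m _; simp [gfd]
  | succ n ih =>
    intro m hm
    obtain ⟨m', rfl⟩ : ∃ m', m = m'+1 := ⟨m-1, by omega⟩
    rw [gfd_rec, ih m' (by omega)]
    have : m' + 1 - (n+1) = m' - n := by omega
    rw [this, pow_succ]
    ring

lemma gfd_eq_zero (j : ℕ) : ∀ n m : ℕ, m < n → gfd n j m = 0 := by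
  intro n
  induction n with
  | zero => intro m hm; omega
  | succ n ih =>
    intro m hm
    match m with
    | 0 => exact gfd_zero_right (n+1) j (by omega)
    | m'+1 => rw [gfd_rec, ih m' (by omega)]; simp

lemma choose_id6 (k j : ℕ) :
    (k.choose j : ℤ) * ((k+j).choose j : ℤ) = ((k+j).choose (2*j) : ℤ) * ((2*j).choose j : ℤ) := by
  rcases le_or_gt j k with h | h
  · have h1 := Nat.choose_mul (n := k+j) (k := 2*j) (s := j) (by omega)
    have h2 : k+j-j = k := by omega
    have h3 : 2*j - j = j := by omega
    rw [h2, h3] at h1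
    have := congrArg (Nat.cast (R := ℤ)) h1
    push_cast at this
    rw [this]; ring
  · have h1 : k.choose j = 0 := Nat.choose_eq_zero_of_lt h
    have h2 : (k+j).choose (2*j) = 0 := Nat.choose_eq_zero_of_lt (by omega)
    simp [h1, h2]

lemma choose_id9 (m n : ℕ) (hmn : m ≤ n) :
    (2*n).choose n * (n.choose m) = (2*n).choose (n+m) * ((n+m).choose m) := by
  have h1 := Nat.choose_mul (n := 2*n) (k := n+m) (s := m) (by omega)
  have h2 := Nat.choose_mul (n := 2*n) (k := n) (s := m) (by omega)
  have h3 : n + m - m = n := by omega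
  have h4 : 2*n - m = n + (n - m) := by omega
  have h5 : (2*n - m).choose n = (2*n-m).choose (n-m) := by
    rw [Nat.choose_symm_of_eq_add h4]
  rw [h3, h5] at h1
  omega


lemma sum_range_split {M : Type*} [AddCommMonoid M] (f : ℕ → M) (p : ℕ) (hp : 1 ≤ p) :
    ∑ k ∈ range (p+1), f k = f 0 + (∑ k ∈ Icc 1 (p-1), f k) + f p := by
  obtain ⟨n, rfl⟩ : ∃ n, p = n + 1 := ⟨p-1, by omega⟩
  rw [Finset.sum_range_succ, Finset.sum_range_succ']
  have h : ∑ k ∈ range n, f (k+1) = ∑ k ∈ Icc 1 (n+1-1), f k := by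
    refine Finset.sum_nbij' (fun k => k + 1) (fun k => k - 1) ?_ ?_ ?_ ?_ ?_
    · intro a ha; simp at ha ⊢; omega
    · intro a ha; simp at ha ⊢; omega
    · intro a _; simp
    · intro a ha; simp at ha ⊢; omega
    · intro a _; rfl
  rw [h]; abel

section PrimePart
variable (p : ℕ) [hp : Fact p.Prime]

lemma choose_padd (r : ℕ) (hr : r < p) : (((p + r).choose r : ℕ) : ZMod p) = 1 := by
  induction r with
  | zero => simp
  | succ r ih =>
    have hdvd : p ∣ (p+r).choose (r+1) :=
      Nat.Prime.dvd_choose hp.out (by omega) (by omega) (by omega)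
    have hps : (p + (r+1)).choose (r+1) = (p+r).choose r + (p+r).choose (r+1) := by
      have h : p + (r+1) = (p+r) + 1 := by omega
      rw [h, Nat.choose_succ_succ]
    rw [hps]
    push_cast
    rw [ih (by omega), (ZMod.natCast_eq_zero_iff _ _).mpr hdvd]
    ring

lemma choose_p_sub_one (k : ℕ) (hk : k ≤ p - 1) : (((p-1).choose k : ℕ) : ZMod p) = (-1)^k := by
  induction k with
  | zero => simp
  | succ k ih =>
    have hp1 : 1 ≤ p := hp.out.one_lt.le.trans' (by omega)
    have hps : (p-1).choose k + (p-1).choose (k+1) = p.choose (k+1) := by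
      have h : p = (p-1) + 1 := by omega
      conv_rhs => rw [h]
      rw [Nat.choose_succ_succ]
    have hdvd : p ∣ p.choose (k+1) :=
      Nat.Prime.dvd_choose_self hp.out (by omega) (by omega)
    have hcast := congrArg (Nat.cast (R := ZMod p)) hps
    push_cast at hcast
    rw [ih (by omega), (ZMod.natCast_eq_zero_iff _ _).mpr hdvd] at hcast
    have : ((p-1).choose (k+1) : ZMod p) = -(-1)^k := by linear_combination hcast
    rw [this, pow_succ]
    ring

def ck (k : ℕ) : ℤ := ((p.choose k / p : ℕ) : ℤ)

lemma ck_mul (k : ℕ) (h1 : k ≠ 0) (hk : k < p) : (p : ℤ) * ck p k = (p.choose k : ℤ) := by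
  have hdvd : p ∣ p.choose k := Nat.Prime.dvd_choose_self hp.out h1 hk
  rw [ck]
  exact_mod_cast congrArg (Nat.cast (R := ℤ)) (Nat.mul_div_cancel' hdvd)

lemma k_mul_ck (k : ℕ) (h1 : 1 ≤ k) (hk : k ≤ p - 1) :
    (k : ℤ) * ck p k = ((p-1).choose (k-1) : ℤ) := by
  have hp1 : 2 ≤ p := hp.out.two_le
  have hmain : p * ((p-1).choose (k-1)) = p.choose k * k := by
    have h := Nat.add_one_mul_choose_eq (p-1) (k-1)
    have h2 : p - 1 + 1 = p := by omega
    have h3 : k - 1 + 1 = k := by omega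
    rw [h2, h3] at h
    exact h
  have hck := ck_mul p k (by omega) (by omega)
  have hcast := congrArg (Nat.cast (R := ℤ)) hmain
  push_cast at hcast
  nlinarith [hcast, hck]

lemma ck_mod (k : ℕ) (h1 : 1 ≤ k) (hk : k ≤ p - 1) :
    ((ck p k : ℤ) : ZMod p) = (-1)^(k-1) * (k : ZMod p)⁻¹ := by
  have hkz : (k : ZMod p) ≠ 0 := by
    rw [Ne, ZMod.natCast_eq_zero_iff]
    intro hdvd
    have := Nat.le_of_dvd (by omega) hdvd
    omega
  have hmain := congrArg (Int.cast (R := ZMod p)) (k_mul_ck p k h1 hk)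
  push_cast at hmain
  rw [choose_p_sub_one p (k-1) (by omega)] at hmain
  field_simp at hmain ⊢
  linear_combination hmain

end PrimePart

lemma modsq_of_mod (p x y : ℤ) (h : x ≡ y [ZMOD p]) : p * x ≡ p * y [ZMOD p^2] := by
  have hd : p ∣ y - x := Int.ModEq.dvd h
  obtain ⟨t, ht⟩ := hd
  have hd2 : p^2 ∣ p*y - p*x := ⟨t, by rw [← mul_sub, ht]; ring⟩
  exact Int.modEq_iff_dvd.mpr hd2

lemma zmod_eq_to_modeq (p : ℕ) (x y : ℤ) (h : (x : ZMod p) = (y : ZMod p)) : x ≡ y [ZMOD (p:ℤ)] := by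
  exact_mod_cast (ZMod.intCast_eq_intCast_iff x y p).mp h

lemma delannoy_eq (k p : ℕ) (hk : k ≤ p) :
    delannoyPoly k (-2) = ∑ j ∈ range (p+1), ((k+j).choose (2*j) : ℤ) * ((2*j).choose j : ℤ) * (-2)^j := by
  rw [delannoyPoly]
  have hsub : range (k+1) ⊆ range (p+1) := by
    intro x hx; simp at hx ⊢; omega
  rw [← Finset.sum_subset hsub (fun x hx hnx => by
    simp only [Finset.mem_range] at hx hnx
    have hlt : k + x < 2*x := by omega
    simp [Nat.choose_eq_zero_of_lt hlt])]
  refine Finset.sum_congr rfl fun j _ => ?_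
  have h := choose_id6 k j
  push_cast
  rw [← h]

def Tsum (p : ℕ) : ℤ := ∑ k ∈ range (p+1), (-1)^k * (p.choose k : ℤ) * delannoyPoly k (-2)

lemma Tsum_eq (p M : ℕ) (hM : p = 2*M+1) :
    Tsum p = - ∑ m ∈ Icc 0 M, ((2*(p-m)).choose (p-m) : ℤ) * ((p-m).choose m : ℤ) * (-2)^(p-m) := by
  have hstep1 : Tsum p = ∑ j ∈ range (p+1), ((2*j).choose j : ℤ) * (-2)^j * gfd p j (2*j) := by
    rw [Tsum]
    rw [Finset.sum_congr rfl (fun k hk => by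
      rw [delannoy_eq k p (by simp at hk; omega), Finset.mul_sum])]
    rw [Finset.sum_comm]
    refine Finset.sum_congr rfl fun j _ => ?_
    rw [gfd, Finset.mul_sum]
    refine Finset.sum_congr rfl fun k _ => ?_
    ring
  have hstep2 : ∀ j ∈ range (p+1), ((2*j).choose j : ℤ) * (-2)^j * gfd p j (2*j)
      = if M + 1 ≤ j then -(((2*j).choose j : ℤ) * (-2)^j * (j.choose (2*j - p) : ℤ)) else 0 := by
    intro j hj
    by_cases h : M + 1 ≤ j
    · rw [if_pos h, gfd_eq_of_le j p (2*j) (by omega)]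
      have hodd : Odd p := ⟨M, by omega⟩
      rw [hodd.neg_one_pow]
      ring
    · rw [if_neg h, gfd_eq_zero j p (2*j) (by omega)]
      ring
  rw [hstep1, Finset.sum_congr rfl hstep2, ← Finset.sum_filter]
  have hfil : (range (p+1)).filter (fun j => M + 1 ≤ j) = Icc (M+1) p := by
    ext x; simp [Finset.mem_filter, Finset.mem_range, Finset.mem_Icc]; omega
  rw [hfil, Finset.sum_neg_distrib]
  rw [neg_inj]
  refine Finset.sum_nbij' (fun j => p - j) (fun m => p - m) ?_ ?_ ?_ ?_ ?_
  · intro a ha; simp at ha ⊢; omega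
  · intro a ha; simp at ha ⊢; omega
  · intro a ha; simp at ha ⊢; omega
  · intro a ha; simp at ha ⊢; omega
  · intro j hj
    simp only [Finset.mem_Icc] at hj
    have h1 : 2*(p - (p - j)) = 2*j := by omega
    have h2 : p - (p - j) = j := by omega
    rw [h1, h2]
    have h4 : j.choose (2*j - p) = j.choose (p - j) := Nat.choose_symm_of_eq_add (by omega)
    rw [h4]
    ring


lemma modeq_sum {α : Type*} (s : Finset α) (f g : α → ℤ) (n : ℤ)
    (h : ∀ a ∈ s, f a ≡ g a [ZMOD n]) : (∑ a ∈ s, f a) ≡ (∑ a ∈ s, g a) [ZMOD n] := by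
  rw [Int.modEq_iff_dvd, ← Finset.sum_sub_distrib]
  exact Finset.dvd_sum fun a ha => Int.ModEq.dvd (h a ha)

section PrimePart2
variable (p : ℕ) [hp : Fact p.Prime]

lemma C2p_mod : ((2*p).choose p : ℤ) ≡ 2 [ZMOD (p:ℤ)^2] := by
  have hp1 : 1 ≤ p := hp.out.pos
  have hv : (2*p).choose p = ∑ k ∈ range (p+1), p.choose k * p.choose k := by
    have h := Nat.add_choose_eq p p p
    rw [Finset.Nat.sum_antidiagonal_eq_sum_range_succ_mk] at h
    have h2 : 2*p = p + p := by omega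
    rw [h2, h]
    refine Finset.sum_congr rfl fun k hk => ?_
    simp only [Finset.mem_range] at hk
    rw [Nat.choose_symm (by omega : k ≤ p)]
  have hcast : ((2*p).choose p : ℤ) = ∑ k ∈ range (p+1), (p.choose k : ℤ) * (p.choose k : ℤ) := by
    rw [hv]; push_cast; rfl
  rw [hcast, sum_range_split _ p hp1]
  simp only [Nat.choose_zero_right, Nat.choose_self, Nat.cast_one, one_mul]
  have hmid : ∑ k ∈ Icc 1 (p-1), (p.choose k : ℤ) * (p.choose k : ℤ) ≡ 0 [ZMOD (p:ℤ)^2] := by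
    rw [Int.modEq_zero_iff_dvd]
    refine Finset.dvd_sum fun k hk => ?_
    simp only [Finset.mem_Icc] at hk
    rw [← ck_mul p k (by omega) (by omega)]
    exact ⟨ck p k * ck p k, by ring⟩
  have h3 : (1 + (∑ k ∈ Icc 1 (p-1), (p.choose k : ℤ) * (p.choose k : ℤ)) + 1 : ℤ)
      = (∑ k ∈ Icc 1 (p-1), (p.choose k : ℤ) * (p.choose k : ℤ)) + 2 := by ring
  rw [h3]
  simpa using hmid.add_right 2


def Wsum (M : ℕ) : ℤ := ∑ m ∈ Icc 1 M, (-2)^(p-m) * ck p m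

lemma Tsum_mod (M : ℕ) (hM : p = 2*M+1) :
    Tsum p ≡ 2^(p+1) - (p:ℤ) * Wsum p M [ZMOD (p:ℤ)^2] := by
  have hodd : Odd p := ⟨M, by omega⟩
  rw [Tsum_eq p M hM]
  have hsplit : Icc 0 M = insert 0 (Icc 1 M) := by
    ext x; simp [Finset.mem_Icc, Finset.mem_insert]; omega
  rw [hsplit, Finset.sum_insert (by simp)]
  simp only [Nat.sub_zero, Nat.choose_zero_right, Nat.cast_one, mul_one]
  have h0 : ((2*p).choose p : ℤ) * (-2)^p ≡ -2^(p+1) [ZMOD (p:ℤ)^2] := by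
    have h := (C2p_mod p).mul_right ((-2:ℤ)^p)
    have hneg : (-2:ℤ)^p = -(2^p) := Odd.neg_pow hodd 2
    calc ((2*p).choose p : ℤ) * (-2)^p ≡ 2 * (-2)^p [ZMOD (p:ℤ)^2] := h
      _ = -2^(p+1) := by rw [hneg]; ring
  have hmid : ∑ m ∈ Icc 1 M, ((2*(p-m)).choose (p-m) : ℤ) * ((p-m).choose m : ℤ) * (-2)^(p-m)
      ≡ (p:ℤ) * Wsum p M [ZMOD (p:ℤ)^2] := by
    rw [Wsum, Finset.mul_sum]
    refine modeq_sum _ _ _ _ fun m hm => ?_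
    simp only [Finset.mem_Icc] at hm
    have hid : ((2*(p-m)).choose (p-m) : ℤ) * ((p-m).choose m : ℤ)
        = ((2*(p-m)).choose p : ℤ) * (p.choose m : ℤ) := by
      have h9 := choose_id9 m (p-m) (by omega)
      have hpm : (p-m) + m = p := by omega
      rw [hpm] at h9
      exact_mod_cast congrArg (Nat.cast (R := ℤ)) h9
    have hckm := ck_mul p m (by omega) (by omega)
    have hterm : ((2*(p-m)).choose (p-m) : ℤ) * ((p-m).choose m : ℤ) * (-2)^(p-m)
        = (p:ℤ) * ((((-2:ℤ)^(p-m) * ck p m)) * ((2*(p-m)).choose p : ℤ)) := by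
      rw [hid, ← hckm]; ring
    rw [hterm]
    refine modsq_of_mod _ _ _ ?_
    refine zmod_eq_to_modeq p _ _ ?_
    have hC1 : (((2*(p-m)).choose p : ℕ) : ZMod p) = 1 := by
      have h2 : 2*(p-m) = p + (p - 2*m) := by omega
      rw [h2, Nat.choose_symm_add]
      exact choose_padd p (p - 2*m) (by omega)
    push_cast
    rw [hC1]
    ring
  have hfin := (h0.add hmid).neg
  have e : -(-2^(p+1) + (p:ℤ) * Wsum p M) = 2^(p+1) - (p:ℤ) * Wsum p M := by ring
  rw [e] at hfin
  exact hfin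

def Ssum : ℤ := ∑ k ∈ Icc 1 (p-1), ck p k * (-2)^k

lemma Ssum_eq (M : ℕ) (hM : p = 2*M+1) : (p:ℤ) * Ssum p = 2^p - 2 := by
  have hodd : Odd p := ⟨M, by omega⟩
  have hp1 : 1 ≤ p := by omega
  have h := add_pow (-2 : ℤ) 1 p
  have hL : ((-2:ℤ) + 1)^p = -1 := by
    norm_num
    exact Odd.neg_one_pow hodd
  rw [hL, sum_range_split (fun k => (-2:ℤ)^k * 1^(p-k) * (p.choose k : ℤ)) p hp1] at h
  simp only [pow_zero, one_mul, one_pow, mul_one, Nat.choose_zero_right, Nat.choose_self,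
    Nat.cast_one, Nat.sub_self] at h
  have hmid : ∑ k ∈ Icc 1 (p-1), (-2:ℤ)^k * (p.choose k : ℤ)
      = (p:ℤ) * Ssum p := by
    rw [Ssum, Finset.mul_sum]
    refine Finset.sum_congr rfl fun k hk => ?_
    simp only [Finset.mem_Icc] at hk
    rw [← ck_mul p k (by omega) (by omega)]
    ring
  rw [hmid] at h
  have hneg : (-2:ℤ)^p = -(2^p) := Odd.neg_pow hodd 2
  rw [hneg] at h
  linarith [h]

lemma Dp_mod (M : ℕ) (hM : p = 2*M+1) :
    delannoyPoly p (-2) ≡ 1 - 2^(p+1) + (p:ℤ) * Ssum p [ZMOD (p:ℤ)^2] := by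
  have hodd : Odd p := ⟨M, by omega⟩
  have hp1 : 1 ≤ p := by omega
  rw [delannoyPoly, sum_range_split (fun k => ((p.choose k : ℤ) * ((p+k).choose k : ℤ)) * (-2)^k) p hp1]
  simp only [pow_zero, mul_one, Nat.choose_zero_right, Nat.choose_self, Nat.cast_one, one_mul,
    Nat.add_zero, Nat.choose_zero_right]
  have hend : ((p+p).choose p : ℤ) * (-2)^p ≡ -2^(p+1) [ZMOD (p:ℤ)^2] := by
    have h2 : p + p = 2*p := by omega
    rw [h2]
    have h := (C2p_mod p).mul_right ((-2:ℤ)^p)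
    have hneg : (-2:ℤ)^p = -(2^p) := Odd.neg_pow hodd 2
    calc ((2*p).choose p : ℤ) * (-2)^p ≡ 2 * (-2)^p [ZMOD (p:ℤ)^2] := h
      _ = -2^(p+1) := by rw [hneg]; ring
  have hmid : ∑ k ∈ Icc 1 (p-1), ((p.choose k : ℤ) * ((p+k).choose k : ℤ)) * (-2)^k
      ≡ (p:ℤ) * Ssum p [ZMOD (p:ℤ)^2] := by
    rw [Ssum, Finset.mul_sum]
    refine modeq_sum _ _ _ _ fun k hk => ?_
    simp only [Finset.mem_Icc] at hk
    have hckm := ck_mul p k (by omega) (by omega)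
    have hterm : ((p.choose k : ℤ) * ((p+k).choose k : ℤ)) * (-2)^k
        = (p:ℤ) * ((ck p k * (-2)^k) * ((p+k).choose k : ℤ)) := by
      rw [← hckm]; ring
    rw [hterm]
    refine modsq_of_mod _ _ _ ?_
    refine zmod_eq_to_modeq p _ _ ?_
    have hC1 : (((p+k).choose k : ℕ) : ZMod p) = 1 := choose_padd p k (by omega)
    push_cast
    rw [hC1]
    ring
  have hfin := Int.ModEq.add (Int.ModEq.add_left 1 hmid) hend
  have e : (1 + (p:ℤ) * Ssum p) + -2^(p+1) = 1 - 2^(p+1) + (p:ℤ) * Ssum p := by ring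
  rw [e] at hfin
  exact hfin

def Usum : ℤ := ∑ k ∈ Icc 1 (p-1), (-1)^k * (p.choose k : ℤ) * delannoyPoly k (-2)
def Vsum : ℤ := ∑ k ∈ Icc 1 (p-1), (-1)^k * ck p k * delannoyPoly k (-2)

lemma Usum_eq_pV : Usum p = (p:ℤ) * Vsum p := by
  rw [Usum, Vsum, Finset.mul_sum]
  refine Finset.sum_congr rfl fun k hk => ?_
  simp only [Finset.mem_Icc] at hk
  rw [← ck_mul p k (by omega) (by omega)]
  ring

lemma Usum_eq (M : ℕ) (hM : p = 2*M+1) :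
    Usum p = Tsum p - 1 + delannoyPoly p (-2) := by
  have hodd : Odd p := ⟨M, by omega⟩
  have hp1 : 1 ≤ p := by omega
  rw [Tsum, sum_range_split (fun k => (-1:ℤ)^k * (p.choose k : ℤ) * delannoyPoly k (-2)) p hp1]
  have h0 : (-1:ℤ)^0 * (p.choose 0 : ℤ) * delannoyPoly 0 (-2) = 1 := by
    simp [delannoyPoly]
  have hp' : (-1:ℤ)^p * (p.choose p : ℤ) * delannoyPoly p (-2) = - delannoyPoly p (-2) := by
    rw [Odd.neg_one_pow hodd]
    simp
  rw [h0, hp']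
  rw [Usum]
  ring

lemma Usum_mod (M : ℕ) (hM : p = 2*M+1) (q : ℤ) (hq : (p:ℤ) * q = 2^(p-1) - 1) :
    Usum p ≡ (p:ℤ) * (2*q - Wsum p M) [ZMOD (p:ℤ)^2] := by
  have h2p : (2:ℤ)^p = 2 * 2^(p-1) := by
    have hpe : p - 1 + 1 = p := by omega
    calc (2:ℤ)^p = 2^(p-1+1) := by rw [hpe]
      _ = 2^(p-1) * 2 := by rw [pow_succ]
      _ = 2 * 2^(p-1) := by ring
  have hS : (p:ℤ) * Ssum p = 2 * ((p:ℤ) * q) := by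
    rw [hq, Ssum_eq p M hM, h2p]; ring
  rw [Usum_eq p M hM]
  have h1 := (Tsum_mod p M hM).add_right (-1 : ℤ)
  have hcomb := h1.add (Dp_mod p M hM)
  have e : 2^(p+1) - (p:ℤ) * Wsum p M + -1 + (1 - 2^(p+1) + (p:ℤ) * Ssum p)
      = (p:ℤ) * Ssum p - (p:ℤ) * Wsum p M := by ring
  rw [e] at hcomb
  have e2 : (p:ℤ) * Ssum p - (p:ℤ) * Wsum p M = (p:ℤ) * (2*q - Wsum p M) := by
    rw [hS]; ring
  rw [e2] at hcomb
  exact hcomb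


def XI : ℤ := ∑ k ∈ Icc 1 (p-1), ck p k * wq k
def YI : ℤ := ∑ k ∈ Icc 1 (p-1), ck p k * vq k

lemma qell_p_eq (M : ℕ) (hM : p = 2*M+1) : qell p = 1 + (p:ℤ) * XI p := by
  have h := (qell_pell_eq_sum p).1
  rw [sum_range_split (fun k => (p.choose k : ℤ) * wq k) p (by omega)] at h
  have hw0 : wq 0 = 1 := by simp [wq]
  have hwp : wq p = 0 := by
    have hne : ¬ Even p := by rw [Nat.even_iff]; omega
    simp [wq, hne]
  simp only [hw0, hwp, Nat.choose_zero_right, Nat.choose_self, Nat.cast_one, mul_one, mul_zero,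
    add_zero, one_mul] at h
  rw [h, XI, Finset.mul_sum]
  congr 1
  refine Finset.sum_congr rfl fun k hk => ?_
  simp only [Finset.mem_Icc] at hk
  rw [← ck_mul p k (by omega) (by omega)]
  ring

lemma pell_p_eq (M : ℕ) (hM : p = 2*M+1) : pellNum p = 2^M + (p:ℤ) * YI p := by
  have h := (qell_pell_eq_sum p).2
  rw [sum_range_split (fun k => (p.choose k : ℤ) * vq k) p (by omega)] at h
  have hv0 : vq 0 = 0 := by simp [vq]
  have hvp : vq p = 2^M := by
    have hne : ¬ Even p := by rw [Nat.even_iff]; omega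
    have hdiv : p/2 = M := by omega
    simp [vq, hne, hdiv]
  simp only [hv0, hvp, Nat.choose_zero_right, Nat.choose_self, Nat.cast_one, mul_one, mul_zero,
    zero_add, one_mul] at h
  rw [h, YI, Finset.mul_sum]
  rw [add_comm]
  congr 1
  refine Finset.sum_congr rfl fun k hk => ?_
  simp only [Finset.mem_Icc] at hk
  rw [← ck_mul p k (by omega) (by omega)]
  ring

lemma pell_pred (M : ℕ) (hM : p = 2*M+1) : pellNum (p-1) = qell p - pellNum p := by
  have h := qell_pell_succ (p-1)
  have he : p - 1 + 1 = p := by omega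
  rw [he] at h
  omega

lemma pell_succ' : pellNum (p+1) = qell p + pellNum p := (qell_pell_succ p).2

end PrimePart2

section ZModPart
variable (p : ℕ) [hp : Fact p.Prime]

def SigZ (M : ℕ) : ZMod p := ∑ m ∈ Icc 1 M, ((2:ZMod p)^m)⁻¹ * (m:ZMod p)⁻¹
def H2Z (M : ℕ) : ZMod p := ∑ m ∈ Icc 1 M, (2:ZMod p)^m * (m:ZMod p)⁻¹
def XZ : ZMod p := ∑ k ∈ Icc 1 (p-1), ((wq k : ℤ) : ZMod p) * (k:ZMod p)⁻¹
def YZ : ZMod p := ∑ k ∈ Icc 1 (p-1), ((vq k : ℤ) : ZMod p) * (k:ZMod p)⁻¹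

lemma kcast_ne (k : ℕ) (h1 : 1 ≤ k) (h2 : k ≤ p-1) : (k:ZMod p) ≠ 0 := by
  rw [Ne, ZMod.natCast_eq_zero_iff]
  intro hdvd
  have := Nat.le_of_dvd (by omega) hdvd
  have := hp.out.two_le
  omega

lemma two_ne (M : ℕ) (hM : p = 2*M+1) (hM1 : 1 ≤ M) : (2:ZMod p) ≠ 0 := by
  have h : ((2:ℕ):ZMod p) ≠ 0 := kcast_ne p 2 (by omega) (by omega)
  simpa using h

lemma neg_one_mul_pow (R : Type*) [CommRing R] (k : ℕ) (hk : 1 ≤ k) :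
    (-1:R)^k * (-1:R)^(k-1) = -1 := by
  obtain ⟨j, rfl⟩ : ∃ j, k = j+1 := ⟨k-1, by omega⟩
  have h1 : (-1:R)^j * (-1:R)^j = 1 := by
    rw [← pow_add]
    exact Even.neg_one_pow ⟨j, rfl⟩
  rw [pow_succ, Nat.add_sub_cancel]
  linear_combination (-1:R) * h1

lemma XZ_eq (M : ℕ) (hM : p = 2*M+1) (hM1 : 1 ≤ M) : XZ p = 2⁻¹ * H2Z p M := by
  have h2ne : (2:ZMod p) ≠ 0 := two_ne p M hM hM1
  rw [XZ, ← Finset.sum_filter_add_sum_filter_not (Icc 1 (p-1)) (fun k => Even k)]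
  have hodd0 : ∑ k ∈ (Icc 1 (p-1)).filter (fun k => ¬ Even k),
      ((wq k : ℤ):ZMod p) * (k:ZMod p)⁻¹ = 0 := by
    refine Finset.sum_eq_zero fun k hk => ?_
    simp only [Finset.mem_filter] at hk
    simp [wq, hk.2]
  rw [hodd0, add_zero, H2Z, Finset.mul_sum]
  refine Finset.sum_nbij' (fun k => k/2) (fun m => 2*m) ?_ ?_ ?_ ?_ ?_
  · intro a ha
    simp only [Finset.mem_filter, Finset.mem_Icc, Nat.even_iff] at ha
    simp only [Finset.mem_Icc]
    omega
  · intro a ha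
    simp only [Finset.mem_Icc] at ha
    simp only [Finset.mem_filter, Finset.mem_Icc, Nat.even_iff]
    omega
  · intro a ha
    simp only [Finset.mem_filter, Finset.mem_Icc, Nat.even_iff] at ha
    omega
  · intro a ha
    simp only [Finset.mem_Icc] at ha
    omega
  · intro k hk
    simp only [Finset.mem_filter, Finset.mem_Icc, Nat.even_iff] at hk
    have hkeq : k = 2 * (k/2) := by omega
    have hwq : wq k = 2^(k/2) := by
      have : Even k := Nat.even_iff.mpr hk.2
      simp [wq, this]
    have hkc : (k : ZMod p) = 2 * ((k/2 : ℕ) : ZMod p) := by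
      conv_lhs => rw [hkeq]
      push_cast
      ring
    rw [hwq, hkc, mul_inv]
    push_cast
    ring

lemma YZ_eq (M : ℕ) (hM : p = 2*M+1) (hM1 : 1 ≤ M) :
    YZ p = -((2:ZMod p)^M) * 2⁻¹ * SigZ p M := by
  have h2ne : (2:ZMod p) ≠ 0 := two_ne p M hM hM1
  rw [YZ, ← Finset.sum_filter_add_sum_filter_not (Icc 1 (p-1)) (fun k => Even k)]
  have heven0 : ∑ k ∈ (Icc 1 (p-1)).filter (fun k => Even k),
      ((vq k : ℤ):ZMod p) * (k:ZMod p)⁻¹ = 0 := by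
    refine Finset.sum_eq_zero fun k hk => ?_
    simp only [Finset.mem_filter] at hk
    simp [vq, hk.2]
  rw [heven0, zero_add, SigZ, Finset.mul_sum]
  refine Finset.sum_nbij' (fun k => (p - k)/2) (fun m => p - 2*m) ?_ ?_ ?_ ?_ ?_
  · intro a ha
    simp only [Finset.mem_filter, Finset.mem_Icc, Nat.even_iff] at ha
    simp only [Finset.mem_Icc]
    omega
  · intro a ha
    simp only [Finset.mem_Icc] at ha
    simp only [Finset.mem_filter, Finset.mem_Icc, Nat.even_iff]
    omega
  · intro a ha
    simp only [Finset.mem_filter, Finset.mem_Icc, Nat.even_iff] at ha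
    omega
  · intro a ha
    simp only [Finset.mem_Icc] at ha
    omega
  · intro k hk
    simp only [Finset.mem_filter, Finset.mem_Icc, Nat.even_iff] at hk
    set m := (p - k)/2 with hm
    have hm1 : 1 ≤ m := by omega
    have hmM : m ≤ M := by omega
    have hkeq : k = p - 2*m := by omega
    have hvq : vq k = 2^(M - m) := by
      have hne : ¬ Even k := by rw [Nat.even_iff]; omega
      have hdiv : k/2 = M - m := by omega
      simp [vq, hne, hdiv]
    have hkc : (k : ZMod p) = -(2 * ((m:ℕ) : ZMod p)) := by
      have hsum : ((k : ℕ) : ZMod p) + ((2*m : ℕ) : ZMod p) = 0 := by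
        rw [← Nat.cast_add, show k + 2*m = p by omega, ZMod.natCast_self]
      push_cast at hsum ⊢
      linear_combination hsum
    have hpow : (2:ZMod p)^(M-m) = 2^M * ((2:ZMod p)^m)⁻¹ := by
      have h1 : (2:ZMod p)^(M-m) * 2^m = 2^M := by
        rw [← pow_add]
        congr 1
        omega
      field_simp
      linear_combination h1
    have hmne : ((m:ℕ) : ZMod p) ≠ 0 := kcast_ne p m (by omega) (by omega)
    rw [hvq, hkc]
    push_cast
    rw [hpow, inv_neg, mul_inv]
    ring

lemma sum2f_split (M : ℕ) (hM : p = 2*M+1) (hM1 : 1 ≤ M) :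
    ∑ k ∈ Icc 1 (p-1), (2:ZMod p)^k * (k:ZMod p)⁻¹ = H2Z p M + (-2) * SigZ p M := by
  have h2ne : (2:ZMod p) ≠ 0 := two_ne p M hM hM1
  have hsplit : Icc 1 (p-1) = Icc 1 M ∪ Icc (M+1) (p-1) := by
    ext x; simp only [Finset.mem_Icc, Finset.mem_union]; omega
  have hdisj : Disjoint (Icc 1 M) (Icc (M+1) (p-1)) := by
    rw [Finset.disjoint_left]
    intro a ha hb
    simp only [Finset.mem_Icc] at ha hb
    omega
  rw [hsplit, Finset.sum_union hdisj]
  congr 1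
  rw [SigZ, Finset.mul_sum]
  refine Finset.sum_nbij' (fun k => p - k) (fun m => p - m) ?_ ?_ ?_ ?_ ?_
  · intro a ha; simp only [Finset.mem_Icc] at ha ⊢; omega
  · intro a ha; simp only [Finset.mem_Icc] at ha ⊢; omega
  · intro a ha; simp only [Finset.mem_Icc] at ha; omega
  · intro a ha; simp only [Finset.mem_Icc] at ha; omega
  · intro k hk
    simp only [Finset.mem_Icc] at hk
    set m := p - k with hm
    have hm1 : 1 ≤ m := by omega
    have hmM : m ≤ M := by omega
    have hpowp : (2:ZMod p)^k * (2:ZMod p)^m = 2 := by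
      rw [← pow_add, show k + m = p by omega]
      have := ZMod.pow_card (2 : ZMod p)
      simpa using this
    have hpow : (2:ZMod p)^k = 2 * ((2:ZMod p)^m)⁻¹ := by
      field_simp
      linear_combination hpowp
    have hkc : (k : ZMod p) = -((m:ℕ) : ZMod p) := by
      have hsum : ((k : ℕ) : ZMod p) + ((m : ℕ) : ZMod p) = 0 := by
        rw [← Nat.cast_add, show k + m = p by omega, ZMod.natCast_self]
      linear_combination hsum
    rw [hpow, hkc, inv_neg]
    ring

lemma Ssum_exact (M : ℕ) (hM : p = 2*M+1) (q : ℤ) (hq : (p:ℤ) * q = 2^(p-1) - 1) :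
    Ssum p = 2 * q := by
  have h2p : (2:ℤ)^p = 2 * 2^(p-1) := by
    have hpe : p - 1 + 1 = p := by omega
    calc (2:ℤ)^p = 2^(p-1+1) := by rw [hpe]
      _ = 2^(p-1) * 2 := by rw [pow_succ]
      _ = 2 * 2^(p-1) := by ring
  have h1 : (p:ℤ) * Ssum p = (p:ℤ) * (2*q) := by
    rw [Ssum_eq p M hM]
    have : (p:ℤ) * (2*q) = 2 * ((p:ℤ) * q) := by ring
    rw [this, hq, h2p]
    ring
  have hpne : (p:ℤ) ≠ 0 := by
    have := hp.out.two_le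
    intro h
    omega
  exact mul_left_cancel₀ hpne h1

lemma sum2f_eq (M : ℕ) (hM : p = 2*M+1) (q : ℤ) (hq : (p:ℤ) * q = 2^(p-1) - 1) :
    ∑ k ∈ Icc 1 (p-1), (2:ZMod p)^k * (k:ZMod p)⁻¹ = -2 * ((q:ℤ) : ZMod p) := by
  have hcast : ((Ssum p : ℤ) : ZMod p) = ∑ k ∈ Icc 1 (p-1), ((ck p k : ℤ) : ZMod p) * (-2:ZMod p)^k := by
    rw [Ssum]
    push_cast
    rfl
  have hterm : ∀ k ∈ Icc 1 (p-1), (2:ZMod p)^k * (k:ZMod p)⁻¹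
      = -(((ck p k : ℤ) : ZMod p) * (-2:ZMod p)^k) := by
    intro k hk
    simp only [Finset.mem_Icc] at hk
    rw [ck_mod p k hk.1 hk.2]
    have hneg2 : (-2:ZMod p)^k = (-1:ZMod p)^k * 2^k := by
      rw [← neg_one_mul, mul_pow]
    rw [hneg2]
    have haux := neg_one_mul_pow (ZMod p) k hk.1
    calc (2:ZMod p)^k * (k:ZMod p)⁻¹
        = -(((-1:ZMod p)^k * (-1:ZMod p)^(k-1)) * (k:ZMod p)⁻¹ * 2^k) := by
          rw [haux]; ring
      _ = -((-1:ZMod p)^(k-1) * (k:ZMod p)⁻¹ * ((-1:ZMod p)^k * 2^k)) := by ring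
  rw [Finset.sum_congr rfl hterm, Finset.sum_neg_distrib, ← hcast,
    Ssum_exact p M hM q hq]
  push_cast
  ring

lemma master (M : ℕ) (hM : p = 2*M+1) (hM1 : 1 ≤ M) (q : ℤ) (hq : (p:ℤ) * q = 2^(p-1) - 1) :
    SigZ p M = 2*((q:ℤ):ZMod p) + 2 * XZ p + 2 * (2:ZMod p)^M * YZ p := by
  have h2ne : (2:ZMod p) ≠ 0 := two_ne p M hM hM1
  have h12 : H2Z p M + (-2) * SigZ p M = -2 * ((q:ℤ):ZMod p) :=
    (sum2f_split p M hM hM1).symm.trans (sum2f_eq p M hM q hq)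
  have h5 : (2:ZMod p)^M * (2:ZMod p)^M = 1 := by
    rw [← pow_add, show M + M = p - 1 by omega]
    exact ZMod.pow_card_sub_one_eq_one h2ne
  have h6 : (2:ZMod p) * 2⁻¹ = 1 := mul_inv_cancel₀ h2ne
  rw [XZ_eq p M hM hM1, YZ_eq p M hM hM1]
  linear_combination (-1 : ZMod p) * h12 + (SigZ p M - H2Z p M) * h6
    + (2 * 2⁻¹ * SigZ p M) * h5


lemma XI_cast (M : ℕ) (hM : p = 2*M+1) : ((XI p : ℤ) : ZMod p) = - XZ p := by
  rw [XI]
  push_cast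
  rw [XZ, ← Finset.sum_neg_distrib]
  refine Finset.sum_congr rfl fun k hk => ?_
  simp only [Finset.mem_Icc] at hk
  rw [ck_mod p k hk.1 hk.2]
  rcases Nat.even_or_odd k with he | ho
  · have h1 : Odd (k-1) := by
      rw [Nat.odd_iff]
      rw [Nat.even_iff] at he
      omega
    rw [Odd.neg_one_pow h1]
    ring
  · have h0 : wq k = 0 := by
      have : ¬ Even k := by rw [Nat.even_iff]; rw [Nat.odd_iff] at ho; omega
      simp [wq, this]
    rw [h0]
    simp

lemma YI_cast (M : ℕ) (hM : p = 2*M+1) : ((YI p : ℤ) : ZMod p) = YZ p := by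
  rw [YI]
  push_cast
  rw [YZ]
  refine Finset.sum_congr rfl fun k hk => ?_
  simp only [Finset.mem_Icc] at hk
  rw [ck_mod p k hk.1 hk.2]
  rcases Nat.even_or_odd k with he | ho
  · have h0 : vq k = 0 := by simp [vq, he]
    rw [h0]
    simp
  · have h1 : Even (k-1) := by
      rw [Nat.even_iff]
      rw [Nat.odd_iff] at ho
      omega
    rw [Even.neg_one_pow h1]
    ring

lemma Wsum_cast (M : ℕ) (hM : p = 2*M+1) (hM1 : 1 ≤ M) :
    ((Wsum p M : ℤ) : ZMod p) = 2 * SigZ p M := by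
  have h2ne : (2:ZMod p) ≠ 0 := two_ne p M hM hM1
  rw [Wsum]
  push_cast
  rw [SigZ, Finset.mul_sum]
  refine Finset.sum_congr rfl fun m hm => ?_
  simp only [Finset.mem_Icc] at hm
  rw [ck_mod p m hm.1 (by omega)]
  have hn2 : (-2:ZMod p) ≠ 0 := by
    intro h
    apply h2ne
    linear_combination -h
  have hpc : (-2:ZMod p)^(p-m) * (-2:ZMod p)^m = -2 := by
    rw [← pow_add, show p - m + m = p by omega]
    exact ZMod.pow_card (-2:ZMod p)
  have hm2 : (-2:ZMod p)^m = (-1:ZMod p)^m * 2^m := by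
    rw [← neg_one_mul, mul_pow]
  have hppow : (-2:ZMod p)^(p-m) = -2 * ((-2:ZMod p)^m)⁻¹ := by
    field_simp
    linear_combination hpc
  have hinv1 : ((-1:ZMod p)^m)⁻¹ = (-1:ZMod p)^m := by
    rw [← inv_pow, inv_neg_one]
  have haux := neg_one_mul_pow (ZMod p) m hm.1
  rw [hppow, hm2, mul_inv, hinv1]
  linear_combination (-2 * ((2:ZMod p)^m)⁻¹ * ((m:ℕ):ZMod p)⁻¹) * haux

end ZModPart
end Sun


open Sun

theorem sun_1_7 (p : ℕ) [Fact p.Prime] (hp : Odd p) :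
    ∑ k ∈ Finset.Icc 1 (p - 1), (delannoyPoly k (-2) : ZMod p) * (k : ZMod p)⁻¹ =
      -4 * ((pellNum ((p : ℤ) - legendreSym p 2).toNat / p : ℤ) : ZMod p) := by
  obtain ⟨M, hM⟩ := hp
  have hple := (Fact.out : p.Prime).two_le
  have hM1 : 1 ≤ M := by omega
  have hpne : (p:ℤ) ≠ 0 := by
    have h : p ≠ 0 := by omega
    exact_mod_cast h
  have h2ne : (2:ZMod p) ≠ 0 := two_ne p M hM hM1
  -- Fermat quotient q
  have hdvdq : (p:ℤ) ∣ 2^(p-1) - 1 := by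
    have h1 : ((2^(p-1) - 1 : ℤ) : ZMod p) = 0 := by
      push_cast
      rw [ZMod.pow_card_sub_one_eq_one h2ne]
      ring
    exact_mod_cast (ZMod.intCast_zmod_eq_zero_iff_dvd _ p).mp h1
  obtain ⟨q, hq⟩ := hdvdq
  have hq' : (p:ℤ) * q = 2^(p-1) - 1 := hq.symm
  -- LHS rewrite
  have hLHS : ∑ k ∈ Finset.Icc 1 (p - 1), (delannoyPoly k (-2) : ZMod p) * (k : ZMod p)⁻¹
      = -((Vsum p : ℤ) : ZMod p) := by
    rw [Vsum]
    push_cast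
    rw [← Finset.sum_neg_distrib]
    refine Finset.sum_congr rfl fun k hk => ?_
    simp only [Finset.mem_Icc] at hk
    rw [ck_mod p k hk.1 hk.2]
    have haux := neg_one_mul_pow (ZMod p) k hk.1
    linear_combination ((k:ZMod p)⁻¹ * ((delannoyPoly k (-2) : ℤ) : ZMod p)) * haux
  -- V ≡ 2q - W mod p
  have hVW : ((Vsum p : ℤ) : ZMod p) = 2*((q:ℤ):ZMod p) - ((Wsum p M : ℤ):ZMod p) := by
    have hU := Usum_mod p M hM q hq'
    rw [Usum_eq_pV] at hU
    have hdd := Int.ModEq.dvd hU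
    have hfact : (p:ℤ) ∣ (2*q - Wsum p M) - Vsum p := by
      obtain ⟨t, ht⟩ := hdd
      refine ⟨t, ?_⟩
      have h1 : (p:ℤ) * ((2*q - Wsum p M) - Vsum p) = (p:ℤ) * ((p:ℤ) * t) := by
        have h2 : (p:ℤ)^2 * t = (p:ℤ) * ((p:ℤ)*t) := by ring
        rw [← h2, ← ht]
        ring
      exact mul_left_cancel₀ hpne h1
    have hmod : Vsum p ≡ 2*q - Wsum p M [ZMOD (p:ℤ)] := Int.modEq_iff_dvd.mpr hfact
    have hcast := (ZMod.intCast_eq_intCast_iff _ _ _).mpr hmod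
    rw [hcast]
    push_cast
    ring
  have hmaster := master p M hM hM1 q hq'
  have hWc := Wsum_cast p M hM hM1
  have hXc := XI_cast p M hM
  have hYc := YI_cast p M hM
  -- Legendre symbol
  have hlne : ((2:ℤ) : ZMod p) ≠ 0 := by push_cast; exact h2ne
  have heuler : ((legendreSym p 2 : ℤ) : ZMod p) = (2:ZMod p)^M := by
    rw [legendreSym.eq_pow, show p/2 = M by omega]
    push_cast
    ring
  rcases legendreSym.eq_one_or_neg_one p hlne with hl | hl
  · -- case (2|p) = 1
    have hidx : ((p:ℤ) - legendreSym p 2).toNat = p - 1 := by rw [hl]; omega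
    have h2M : (2:ZMod p)^M = 1 := by
      rw [← heuler, hl]
      push_cast
      ring
    have hdvdd : (p:ℤ) ∣ 2^M - 1 := by
      have h1 : ((2^M - 1 : ℤ) : ZMod p) = 0 := by push_cast; rw [h2M]; ring
      exact_mod_cast (ZMod.intCast_zmod_eq_zero_iff_dvd _ p).mp h1
    obtain ⟨d, hd⟩ := hdvdd
    have hq2 : q = d * (2^M + 1) := by
      refine mul_left_cancel₀ hpne ?_
      rw [hq']
      have h2 : (2:ℤ)^(p-1) = 2^M * 2^M := by
        rw [← pow_add]
        congr 1
        omega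
      rw [h2]
      linear_combination ((2:ℤ)^M + 1) * hd
    have hqd : ((q:ℤ):ZMod p) = 2 * ((d:ℤ):ZMod p) := by
      rw [hq2]
      push_cast
      rw [h2M]
      ring
    have hPeq : pellNum (p-1) = (p:ℤ) * (-d + XI p - YI p) := by
      rw [pell_pred p M hM, qell_p_eq p M hM, pell_p_eq p M hM]
      linear_combination -hd
    have hdiv : (pellNum (p-1) : ℤ) / (p:ℤ) = -d + XI p - YI p := by
      rw [hPeq, Int.mul_ediv_cancel_left _ hpne]
    rw [hidx, hdiv, hLHS, hVW, hWc, hmaster, h2M]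
    push_cast
    rw [hXc, hYc, hqd]
    ring
  · -- case (2|p) = -1
    have hidx : ((p:ℤ) - legendreSym p 2).toNat = p + 1 := by rw [hl]; omega
    have h2M : (2:ZMod p)^M = -1 := by
      rw [← heuler, hl]
      push_cast
      ring
    have hdvdd : (p:ℤ) ∣ 2^M + 1 := by
      have h1 : ((2^M + 1 : ℤ) : ZMod p) = 0 := by push_cast; rw [h2M]; ring
      exact_mod_cast (ZMod.intCast_zmod_eq_zero_iff_dvd _ p).mp h1
    obtain ⟨d, hd⟩ := hdvdd
    have hq2 : q = d * (2^M - 1) := by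
      refine mul_left_cancel₀ hpne ?_
      rw [hq']
      have h2 : (2:ℤ)^(p-1) = 2^M * 2^M := by
        rw [← pow_add]
        congr 1
        omega
      rw [h2]
      linear_combination ((2:ℤ)^M - 1) * hd
    have hqd : ((q:ℤ):ZMod p) = -2 * ((d:ℤ):ZMod p) := by
      rw [hq2]
      push_cast
      rw [h2M]
      ring
    have hPeq : pellNum (p+1) = (p:ℤ) * (d + XI p + YI p) := by
      rw [pell_succ', qell_p_eq p M hM, pell_p_eq p M hM]
      linear_combination hd
    have hdiv : (pellNum (p+1) : ℤ) / (p:ℤ) = d + XI p + YI p := by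
      rw [hPeq, Int.mul_ediv_cancel_left _ hpne]
    rw [hidx, hdiv, hLHS, hVW, hWc, hmaster, h2M]
    push_cast
    rw [hXc, hYc, hqd]
    ring
end

section
/- Let p be an odd prime and let s ∈ {1, 2} and let x be an integer. Then $\delta_{s,2}\,\delta_{p,3} + \sum_{n=1}^{p-1} \frac{D_n(x)}{n^s} \equiv \sum_{k=1}^{(p-1)/2} \frac{(-x)^k}{k^s} \pmod{p}$, where $1/n^s$ and $1/k^s$ denote inverses mod p, and $\delta_{a,b}$ is 1 if a = b and 0 otherwise. -/
open Finset Polynomial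

theorem powsum (p : ℕ) [Fact p.Prime] (j : ℕ) :
    ∑ n ∈ Finset.Icc 1 (p-1), ((n : ZMod p))^j = if (p-1) ∣ j then (-1 : ZMod p) else 0 := by
  classical
  have hp := (Fact.out : p.Prime)
  have hp2 := hp.two_le
  have hcop : ∀ n, n ∈ Finset.Icc 1 (p-1) → Nat.Coprime n p := by
    intro n hn
    have hn' := Finset.mem_Icc.mp hn
    exact Nat.Coprime.symm (hp.coprime_iff_not_dvd.mpr (fun h => by
      have := Nat.le_of_dvd (by omega) h; omega))
  have h1 : ∑ n ∈ Finset.Icc 1 (p-1), ((n : ZMod p))^j = ∑ x : (ZMod p)ˣ, ((x : ZMod p))^j := by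
    apply Finset.sum_bij (i := fun n hn => ZMod.unitOfCoprime n (hcop n hn))
    · intro a ha; exact Finset.mem_univ _
    · intro a ha b hb hab
      have : ((a : ZMod p)) = (b : ZMod p) := by
        have := congrArg (fun u : (ZMod p)ˣ => (u : ZMod p)) hab
        simpa [ZMod.coe_unitOfCoprime] using this
      have ha' := Finset.mem_Icc.mp ha
      have hb' := Finset.mem_Icc.mp hb
      have := congrArg ZMod.val this
      rwa [ZMod.val_cast_of_lt (by omega), ZMod.val_cast_of_lt (by omega)] at this
    · intro u _
      refine ⟨(u : ZMod p).val, Finset.mem_Icc.mpr ⟨?_, ?_⟩, ?_⟩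
      · have : (u : ZMod p) ≠ 0 := Units.ne_zero u
        exact Nat.one_le_iff_ne_zero.mpr ((ZMod.val_ne_zero _).mpr this)
      · have := ZMod.val_lt (u : ZMod p); omega
      · apply Units.ext
        simp [ZMod.coe_unitOfCoprime, ZMod.natCast_val, ZMod.cast_id]
    · intro a ha; simp [ZMod.coe_unitOfCoprime]
  rw [h1, FiniteField.sum_pow_units (ZMod p) j, ZMod.card]


theorem evalsum (p : ℕ) [Fact p.Prime] (Q : Polynomial (ZMod p)) :
    ∑ n ∈ Finset.Icc 1 (p-1), Q.eval (n : ZMod p) =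
      ∑ j ∈ Finset.range (Q.natDegree + 1), Q.coeff j * (if (p-1) ∣ j then (-1 : ZMod p) else 0) := by
  have : ∀ n : ℕ, Q.eval (n : ZMod p) = ∑ j ∈ Finset.range (Q.natDegree + 1), Q.coeff j * ((n:ZMod p))^j :=
    fun n => Polynomial.eval_eq_sum_range _
  simp_rw [this]
  rw [Finset.sum_comm]
  refine Finset.sum_congr rfl (fun j _ => ?_)
  rw [← Finset.mul_sum, powsum p j]


noncomputable def Gpoly (p k : ℕ) : Polynomial (ZMod p) :=
  (Polynomial.X + Polynomial.C (k : ZMod p)) *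
    ∏ j ∈ Finset.Icc 1 (k-1), (Polynomial.X^2 - Polynomial.C ((j : ZMod p)^2))

theorem coeff1_mul {R : Type*} [CommSemiring R] (a b : Polynomial R) :
    (a * b).coeff 1 = a.coeff 0 * b.coeff 1 + a.coeff 1 * b.coeff 0 := by
  rw [Polynomial.coeff_mul]
  rw [Finset.Nat.sum_antidiagonal_eq_sum_range_succ_mk]
  simp [Finset.sum_range_succ]

theorem Gpoly_natDegree (p k : ℕ) [Fact p.Prime] (hk : 1 ≤ k) : (Gpoly p k).natDegree = 2*k - 1 := by
  have hmon : ∀ j ∈ Finset.Icc 1 (k-1), (Polynomial.X^2 - Polynomial.C ((j : ZMod p)^2)).Monic :=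
    fun j _ => Polynomial.monic_X_pow_sub_C _ two_ne_zero
  have hm2 : (∏ j ∈ Finset.Icc 1 (k-1), (Polynomial.X^2 - Polynomial.C ((j : ZMod p)^2))).Monic :=
    Polynomial.monic_prod_of_monic _ _ hmon
  rw [Gpoly, Polynomial.natDegree_mul (Polynomial.X_add_C_ne_zero (k : ZMod p)) hm2.ne_zero,
    Polynomial.natDegree_X_add_C, Polynomial.natDegree_prod _ _ (fun j hj => (hmon j hj).ne_zero)]
  have : ∀ j ∈ Finset.Icc 1 (k-1), (Polynomial.X^2 - Polynomial.C ((j : ZMod p)^2)).natDegree = 2 :=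
    fun j hj => Polynomial.natDegree_X_pow_sub_C
  rw [Finset.sum_congr rfl this, Finset.sum_const, Nat.card_Icc]
  simp only [smul_eq_mul]
  show 1 + (k - 1 + 1 - 1) * 2 = 2 * k - 1
  omega

theorem Gpoly_eval (p k : ℕ) (y : ZMod p) :
    (Gpoly p k).eval y = (y + k) * ∏ j ∈ Finset.Icc 1 (k-1), ((y - j) * (y + j)) := by
  rw [Gpoly, Polynomial.eval_mul, Polynomial.eval_prod]
  simp only [Polynomial.eval_add, Polynomial.eval_X, Polynomial.eval_C, Polynomial.eval_sub,
    Polynomial.eval_pow]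
  congr 1
  refine Finset.prod_congr rfl (fun j _ => by ring)

theorem Gpoly_coeff_one (p k : ℕ) (hk : 1 ≤ k) :
    (Gpoly p k).coeff 1 = (-1)^(k-1) * (Nat.factorial (k-1) : ZMod p)^2 := by
  rw [Gpoly, coeff1_mul]
  have h1 : (Polynomial.X + Polynomial.C ((k:ℕ) : ZMod p)).coeff 1 = 1 := by
    simp [Polynomial.coeff_add, Polynomial.coeff_X_one]
  have h0 : (Polynomial.X + Polynomial.C ((k:ℕ) : ZMod p)).coeff 0 = (k : ZMod p) := by
    simp
  have hH1 : (∏ j ∈ Finset.Icc 1 (k-1), (Polynomial.X^2 - Polynomial.C ((j : ZMod p)^2))).coeff 1 = 0 := by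
    refine Finset.prod_induction _ (fun (q : Polynomial (ZMod p)) => q.coeff 1 = 0) ?_ ?_ ?_
    · intro a b ha hb; rw [coeff1_mul, ha, hb]; ring
    · simp [Polynomial.coeff_one]
    · intro j _
      rw [Polynomial.coeff_sub, Polynomial.coeff_X_pow, Polynomial.coeff_C]
      norm_num
  have hH0 : (∏ j ∈ Finset.Icc 1 (k-1), (Polynomial.X^2 - Polynomial.C ((j : ZMod p)^2))).coeff 0
      = (-1)^(k-1) * (Nat.factorial (k-1) : ZMod p)^2 := by
    rw [Polynomial.coeff_zero_eq_eval_zero, Polynomial.eval_prod]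
    have : ∀ j ∈ Finset.Icc 1 (k-1), (Polynomial.X^2 - Polynomial.C ((j : ZMod p)^2)).eval 0
        = (-1) * (j : ZMod p)^2 := by intro j _; simp
    rw [Finset.prod_congr rfl this, Finset.prod_mul_distrib, Finset.prod_const, Nat.card_Icc]
    have hfact : ∏ j ∈ Finset.Icc 1 (k-1), (j : ZMod p) = (Nat.factorial (k-1) : ZMod p) := by
      rw [← Nat.cast_prod]
      congr 1
      rw [← Finset.Ico_add_one_right_eq_Icc, Finset.prod_Ico_id_eq_factorial]
    rw [← hfact]
    rw [show k - 1 + 1 - 1 = k - 1 by omega]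
    rw [Finset.prod_pow]
  rw [h1, h0, hH1, hH0]; ring

theorem Gpoly_coeff_zero (p k : ℕ) (hk : 1 ≤ k) :
    (Gpoly p k).coeff 0 = (k : ZMod p) * ((-1)^(k-1) * (Nat.factorial (k-1) : ZMod p)^2) := by
  rw [Polynomial.coeff_zero_eq_eval_zero, Gpoly_eval]
  have : ∀ j ∈ Finset.Icc 1 (k-1), ((0:ZMod p) - j) * (0 + j) = (-1) * (j : ZMod p)^2 := by
    intro j _; ring
  rw [Finset.prod_congr rfl this, Finset.prod_mul_distrib, Finset.prod_const, Nat.card_Icc]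
  have hfact : ∏ j ∈ Finset.Icc 1 (k-1), (j : ZMod p) = (Nat.factorial (k-1) : ZMod p) := by
    rw [← Nat.cast_prod]
    congr 1
    rw [← Finset.Ico_add_one_right_eq_Icc, Finset.prod_Ico_id_eq_factorial]
  rw [← hfact, show k - 1 + 1 - 1 = k - 1 by omega, Finset.prod_pow]
  push_cast
  ring



theorem asc_prod (n : ℕ) : ∀ k : ℕ, n.ascFactorial k = ∏ i ∈ Finset.range k, (n + i)
  | 0 => by simp
  | (k+1) => by rw [Nat.ascFactorial_succ, Finset.prod_range_succ, asc_prod n k]; ring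

theorem prodshift {R : Type*} [CommRing R] : ∀ k : ℕ, 1 ≤ k → ∀ y : R,
    ∏ i ∈ Finset.range (2*k), (y + i + 1 - k) =
      y * (y + k) * ∏ j ∈ Finset.Icc 1 (k-1), ((y - j) * (y + j)) := by
  intro k hk
  induction k, hk using Nat.le_induction with
  | base =>
    intro y
    norm_num [Finset.prod_range_succ]
  | succ k hk ih =>
    intro y
    have h2 : 2*(k+1) = (2*k+1)+1 := by ring
    rw [h2, Finset.prod_range_succ, Finset.prod_range_succ']
    have hIcc : (k+1) - 1 = (k-1) + 1 := by omega
    rw [hIcc, Finset.prod_Icc_succ_top (by omega)]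
    have hk1 : ((k-1)+1 : ℕ) = (k : R) := by
      have : (k-1)+1 = k := by omega
      rw [this]
    rw [hk1]
    have e1 : ∀ i : ℕ, y + (i+1 : ℕ) + 1 - ((k+1:ℕ):R) = y + i + 1 - k := by
      intro i; push_cast; ring
    simp_rw [e1]
    rw [ih y]
    push_cast
    ring

theorem chooseprod (n k : ℕ) :
    ((n+k).choose (2*k) : ℤ) * (Nat.factorial (2*k)) = ∏ i ∈ Finset.range (2*k), ((n:ℤ) + i + 1 - k) := by
  rcases le_or_gt k n with h | h
  · have e1 : ∀ i ∈ Finset.range (2*k), ((n:ℤ) + i + 1 - k) = ((n - k + 1 + i : ℕ) : ℤ) := by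
      intro i _; push_cast [Nat.cast_sub h]; ring
    rw [Finset.prod_congr rfl e1, ← Nat.cast_prod, ← asc_prod]
    rw [show n - k + 1 = (n-k) + 1 from rfl, Nat.ascFactorial_eq_factorial_mul_choose]
    have : n - k + 2*k = n + k := by omega
    rw [this]; push_cast; ring
  · rw [Nat.choose_eq_zero_of_lt (by omega)]
    rw [Finset.prod_eq_zero (i := k-1-n) (Finset.mem_range.mpr (by omega))]
    · ring
    · push_cast [Nat.cast_sub (show n ≤ k-1 by omega), Nat.cast_sub (show 1 ≤ k by omega)]
      ring

theorem Gpoly_monic (p k : ℕ) [Fact p.Prime] : (Gpoly p k).Monic := by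
  have hmon : ∀ j ∈ Finset.Icc 1 (k-1), (Polynomial.X^2 - Polynomial.C ((j : ZMod p)^2)).Monic :=
    fun j _ => Polynomial.monic_X_pow_sub_C _ two_ne_zero
  exact (Polynomial.monic_X_add_C _).mul (Polynomial.monic_prod_of_monic _ _ hmon)

theorem keyB (p : ℕ) [Fact p.Prime] (hodd : p % 2 = 1) (hp3 : 3 ≤ p) (s : ℕ) (hs : s = 1 ∨ s = 2)
    (k : ℕ) (hk1 : 1 ≤ k) (hk2 : k ≤ (p-1)/2) :
    ((2*k).choose k : ZMod p) *
      ∑ n ∈ Finset.Icc 1 (p-1), (((n+k).choose (2*k) : ℕ) : ZMod p) * ((n:ZMod p)^s)⁻¹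
    = (-1)^k * ((k:ZMod p)^s)⁻¹ := by
  have hp := (Fact.out : p.Prime)
  have h2kle : 2*k ≤ p - 1 := by omega
  have hfac2k : ((Nat.factorial (2*k) : ℕ) : ZMod p) ≠ 0 := by
    rw [Ne, ZMod.natCast_eq_zero_iff]
    intro h
    have := (Nat.Prime.dvd_factorial hp).mp h
    omega
  have hkne : ((k : ℕ) : ZMod p) ≠ 0 := by
    rw [Ne, ZMod.natCast_eq_zero_iff]
    intro h
    have := Nat.le_of_dvd (by omega) h
    omega
  have hane : ((Nat.factorial (k-1) : ℕ) : ZMod p) ≠ 0 := by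
    rw [Ne, ZMod.natCast_eq_zero_iff]
    intro h
    have := (Nat.Prime.dvd_factorial hp).mp h
    omega
  have hkfac : ((Nat.factorial k : ℕ) : ZMod p) = (k : ZMod p) * (Nat.factorial (k-1) : ZMod p) := by
    rw [← Nat.cast_mul]
    congr 1
    rw [← Nat.mul_factorial_pred (by omega)]
  have hfc : ((Nat.factorial (2*k) : ℕ) : ZMod p)
      = ((2*k).choose k : ZMod p) * ((Nat.factorial k : ℕ) : ZMod p) * ((Nat.factorial k : ℕ) : ZMod p) := by
    have h := Nat.choose_mul_factorial_mul_factorial (show k ≤ 2*k by omega)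
    have h2 : 2*k - k = k := by omega
    rw [h2] at h
    rw [← h]
    push_cast
    ring
  have hCne : ((2*k).choose k : ZMod p) ≠ 0 := by
    intro h
    rw [hfc, h, zero_mul, zero_mul] at hfac2k
    exact hfac2k rfl
  have hnne : ∀ n ∈ Finset.Icc 1 (p-1), ((n : ℕ) : ZMod p) ≠ 0 := by
    intro n hn
    have hn' := Finset.mem_Icc.mp hn
    rw [Ne, ZMod.natCast_eq_zero_iff]
    intro h
    have := Nat.le_of_dvd (by omega) h
    omega
  -- the pointwise identity
  have hA : ∀ n ∈ Finset.Icc 1 (p-1),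
      (((n+k).choose (2*k) : ℕ) : ZMod p) * ((Nat.factorial (2*k) : ℕ) : ZMod p)
        = (n : ZMod p) * (Gpoly p k).eval (n : ZMod p) := by
    intro n hn
    have h := chooseprod n k
    have h2 := congrArg (fun z : ℤ => (z : ZMod p)) h
    simp only [Int.cast_mul] at h2
    push_cast at h2
    rw [h2]
    rw [prodshift k hk1 ((n:ℕ) : ZMod p), Gpoly_eval]
    ring
  have hsign : ((-1 : ZMod p))^k = -((-1 : ZMod p))^(k-1) := by
    conv_lhs => rw [show k = (k-1)+1 by omega]
    rw [pow_succ]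
    ring
  have hA' : ∀ n ∈ Finset.Icc 1 (p-1),
      (((n+k).choose (2*k) : ℕ) : ZMod p)
        = ((Nat.factorial (2*k) : ℕ) : ZMod p)⁻¹ * ((n : ZMod p) * (Gpoly p k).eval (n : ZMod p)) := by
    intro n hn
    have h := hA n hn
    rw [eq_inv_mul_iff_mul_eq₀ hfac2k, mul_comm]
    exact h
  set a : ZMod p := (Nat.factorial (k-1) : ZMod p) with ha
  rcases hs with hs | hs
  · -- s = 1
    subst hs
    have hpt : ∀ n ∈ Finset.Icc 1 (p-1),
        (((n+k).choose (2*k) : ℕ) : ZMod p) * ((n:ZMod p)^1)⁻¹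
          = ((Nat.factorial (2*k) : ℕ) : ZMod p)⁻¹ * (Gpoly p k).eval (n : ZMod p) := by
      intro n hn
      have h := hA' n hn
      have hn0 := hnne n hn
      rw [h, pow_one, mul_assoc]
      congr 1
      rw [mul_comm ((n : ZMod p)) _, mul_assoc, mul_inv_cancel₀ hn0, mul_one]
    rw [Finset.sum_congr rfl hpt, ← Finset.mul_sum, evalsum]
    have hdeg : (Gpoly p k).natDegree = 2*k-1 := Gpoly_natDegree p k hk1
    rw [hdeg]
    have hsum : ∑ j ∈ Finset.range (2*k-1+1), (Gpoly p k).coeff j * (if (p-1) ∣ j then (-1 : ZMod p) else 0)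
        = -(Gpoly p k).coeff 0 := by
      rw [Finset.sum_eq_single 0]
      · simp
      · intro j hj hj0
        rw [if_neg, mul_zero]
        intro hdvd
        have := Nat.le_of_dvd (by omega) hdvd
        have hjr := Finset.mem_range.mp hj
        omega
      · intro h
        exact absurd (Finset.mem_range.mpr (by omega)) h
    rw [hsum, Gpoly_coeff_zero p k hk1]
    rw [hfc, hkfac, hsign]
    rw [← ha]
    field_simp
  · -- s = 2
    subst hs
    have hpt : ∀ n ∈ Finset.Icc 1 (p-1),
        (((n+k).choose (2*k) : ℕ) : ZMod p) * ((n:ZMod p)^2)⁻¹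
          = ((Nat.factorial (2*k) : ℕ) : ZMod p)⁻¹ * (Polynomial.X^(p-2) * Gpoly p k).eval (n : ZMod p) := by
      intro n hn
      have h := hA' n hn
      have hn0 := hnne n hn
      have hinv : ((n:ZMod p))⁻¹ = ((n:ZMod p))^(p-2) := by
        apply inv_eq_of_mul_eq_one_right
        have : ((n:ZMod p)) * ((n:ZMod p))^(p-2) = ((n:ZMod p))^(p-1) := by
          rw [← pow_succ']
          congr 1
          omega
        rw [this, ZMod.pow_card_sub_one_eq_one hn0]
      rw [Polynomial.eval_mul, Polynomial.eval_pow, Polynomial.eval_X, ← hinv, h]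
      have hnn : (n : ZMod p) * (((n : ZMod p))^2)⁻¹ = ((n : ZMod p))⁻¹ := by
        rw [sq, mul_inv, ← mul_assoc, mul_inv_cancel₀ hn0, one_mul]
      rw [mul_assoc, mul_assoc, mul_comm ((Gpoly p k).eval _) ((((n:ZMod p))^2)⁻¹),
        ← mul_assoc ((n:ZMod p)), hnn]
    rw [Finset.sum_congr rfl hpt, ← Finset.mul_sum, evalsum]
    have hGne : Gpoly p k ≠ 0 := (Gpoly_monic p k).ne_zero
    have hdeg : (Polynomial.X^(p-2) * Gpoly p k).natDegree = (p-2) + (2*k-1) := by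
      rw [Polynomial.natDegree_mul (pow_ne_zero _ Polynomial.X_ne_zero) hGne, Polynomial.natDegree_X_pow,
        Gpoly_natDegree p k hk1]
    rw [hdeg]
    have hsum : ∑ j ∈ Finset.range ((p-2) + (2*k-1) + 1),
        (Polynomial.X^(p-2) * Gpoly p k).coeff j * (if (p-1) ∣ j then (-1 : ZMod p) else 0)
        = -(Gpoly p k).coeff 1 := by
      rw [← Finset.sum_subset (s₁ := {0, p-1})
        (Finset.insert_subset (Finset.mem_range.mpr (by omega))
          (Finset.singleton_subset_iff.mpr (Finset.mem_range.mpr (by omega))))]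
      · rw [Finset.sum_pair (by omega)]
        have hc0 : (Polynomial.X^(p-2) * Gpoly p k).coeff 0 = 0 := by
          rw [Polynomial.coeff_zero_eq_eval_zero, Polynomial.eval_mul, Polynomial.eval_pow,
            Polynomial.eval_X, zero_pow (by omega), zero_mul]
        have hcp : (Polynomial.X^(p-2) * Gpoly p k).coeff (p-1) = (Gpoly p k).coeff 1 := by
          rw [show p - 1 = 1 + (p-2) by omega, mul_comm (Polynomial.X^(p-2)) (Gpoly p k),
            Polynomial.coeff_mul_X_pow]
        rw [hc0, hcp, if_pos (dvd_refl _), zero_mul]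
        ring
      · intro j hj hjn
        by_cases hdvd : (p-1) ∣ j
        · exfalso
          rcases hdvd with ⟨c, hc⟩
          have hjr := Finset.mem_range.mp hj
          have hc01 : c = 0 ∨ c = 1 := by
            rcases Nat.lt_or_ge c 2 with h | h
            · omega
            · exfalso
              have h2 : (p-1)*2 ≤ j := by rw [hc]; exact Nat.mul_le_mul_left _ h
              omega
          rcases hc01 with rfl | rfl
          · simp at hc
            exact hjn (by simp [hc])
          · rw [mul_one] at hc
            exact hjn (by simp [hc])
        · rw [if_neg hdvd, mul_zero]
    rw [hsum, Gpoly_coeff_one p k hk1]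
    rw [hfc, hkfac, hsign]
    rw [← ha]
    field_simp

theorem keyA (p : ℕ) [Fact p.Prime] (hodd : p % 2 = 1) (hp3 : 3 ≤ p) (s : ℕ) (hs : s = 1 ∨ s = 2) :
    ∑ n ∈ Finset.Icc 1 (p-1), (((n : ℕ) : ZMod p)^s)⁻¹
      = if s = 2 ∧ p = 3 then (-1 : ZMod p) else 0 := by
  have hnne : ∀ n ∈ Finset.Icc 1 (p-1), ((n : ℕ) : ZMod p) ≠ 0 := by
    intro n hn
    have hn' := Finset.mem_Icc.mp hn
    rw [Ne, ZMod.natCast_eq_zero_iff]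
    intro h
    have := Nat.le_of_dvd (by omega) h
    omega
  have hpt : ∀ n ∈ Finset.Icc 1 (p-1), (((n : ℕ) : ZMod p)^s)⁻¹ = ((n : ℕ) : ZMod p)^((p-2)*s) := by
    intro n hn
    have hn0 := hnne n hn
    have hinv : ((n:ZMod p))⁻¹ = ((n:ZMod p))^(p-2) := by
      apply inv_eq_of_mul_eq_one_right
      have : ((n:ZMod p)) * ((n:ZMod p))^(p-2) = ((n:ZMod p))^(p-1) := by
        rw [← pow_succ']
        congr 1
        omega
      rw [this, ZMod.pow_card_sub_one_eq_one hn0]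
    rw [← inv_pow, hinv, ← pow_mul]
  rw [Finset.sum_congr rfl hpt, powsum]
  rcases hs with hs | hs
  · subst hs
    rw [if_neg, if_neg (by simp)]
    intro h
    rw [mul_one] at h
    have := Nat.le_of_dvd (by omega) h
    omega
  · subst hs
    by_cases hp3' : p = 3
    · subst hp3'
      norm_num
    · rw [if_neg, if_neg (by simp [hp3'])]
      intro h
      have h2 : (p-1) ∣ (p-2)*2 - (p-1) := Nat.dvd_sub h (dvd_refl _)
      have h3 : (p-2)*2 - (p-1) = p - 3 := by omega
      rw [h3] at h2
      have := Nat.le_of_dvd (by omega) h2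
      omega

theorem keyC (p : ℕ) [Fact p.Prime] (hodd : p % 2 = 1) (k : ℕ) (hk1 : (p-1)/2 < k)
    (hk2 : k ≤ p-1) : (((2*k).choose k : ℕ) : ZMod p) = 0 := by
  have hp := (Fact.out : p.Prime)
  have hp2 := hp.two_le
  rw [ZMod.natCast_eq_zero_iff]
  have h := Nat.choose_mul_factorial_mul_factorial (show k ≤ 2*k by omega)
  have h2 : 2*k - k = k := by omega
  rw [h2] at h
  have hdvd : p ∣ (2*k).choose k * Nat.factorial k * Nat.factorial k := by
    rw [h]
    exact (Nat.Prime.dvd_factorial hp).mpr (by omega)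
  have hnk : ¬ p ∣ Nat.factorial k := by
    intro hcon
    have := (Nat.Prime.dvd_factorial hp).mp hcon
    omega
  rcases (Nat.Prime.dvd_mul hp).mp hdvd with h' | h'
  · rcases (Nat.Prime.dvd_mul hp).mp h' with h'' | h''
    · exact h''
    · exact absurd h'' hnk
  · exact absurd h' hnk

theorem chooseid (n k : ℕ) :
    (n+k).choose (2*k) * (2*k).choose k = n.choose k * (n+k).choose k := by
  rcases le_or_gt k n with h | h
  · have h1 := Nat.choose_mul (n := n+k) (show k ≤ 2*k by omega)
    have h2 : n + k - k = n := by omega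
    have h3 : 2*k - k = k := by omega
    rw [h2, h3] at h1
    rw [h1, mul_comm]
  · rw [Nat.choose_eq_zero_of_lt (show n+k < 2*k by omega), Nat.choose_eq_zero_of_lt h]
    ring

theorem sun_3_4 (p : ℕ) (hp : p.Prime) (hodd : Odd p) (s : ℕ) (hs : s = 1 ∨ s = 2) (x : ℤ) :
    (if s = 2 ∧ p = 3 then (1 : ZMod p) else 0) +
        ∑ n ∈ Finset.Icc 1 (p - 1), (delannoyPoly n x : ZMod p) * ((n : ZMod p) ^ s)⁻¹ =
      ∑ k ∈ Finset.Icc 1 ((p - 1) / 2), ((-x : ℤ) ^ k : ZMod p) * ((k : ZMod p) ^ s)⁻¹ := by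
  haveI : Fact p.Prime := ⟨hp⟩
  have hodd' : p % 2 = 1 := Nat.odd_iff.mp hodd
  have hp3 : 3 ≤ p := by
    have h2 := hp.two_le
    omega
  set m := (p-1)/2 with hm
  set y : ZMod p := (x : ZMod p) with hy
  -- rewrite each delannoy term
  have hD : ∀ n ∈ Finset.Icc 1 (p-1), (delannoyPoly n x : ZMod p) * ((n : ZMod p) ^ s)⁻¹
      = ∑ k ∈ Finset.range p, (((n+k).choose (2*k) : ℕ) : ZMod p) *
          ((((2*k).choose k : ℕ) : ZMod p) * (y^k * (((n : ZMod p))^s)⁻¹)) := by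
    intro n hn
    have hn' := Finset.mem_Icc.mp hn
    have h1 : (delannoyPoly n x : ZMod p)
        = ∑ k ∈ Finset.range (n+1), (((n+k).choose (2*k) : ℕ) : ZMod p) *
            ((((2*k).choose k : ℕ) : ZMod p) * y^k) := by
      rw [delannoyPoly]
      push_cast
      refine Finset.sum_congr rfl (fun k _ => ?_)
      have := chooseid n k
      have hc := congrArg (fun z : ℕ => (z : ZMod p)) this
      push_cast at hc
      rw [← mul_assoc, hc]
    have h2 : ∑ k ∈ Finset.range (n+1), (((n+k).choose (2*k) : ℕ) : ZMod p) *
            ((((2*k).choose k : ℕ) : ZMod p) * y^k)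
        = ∑ k ∈ Finset.range p, (((n+k).choose (2*k) : ℕ) : ZMod p) *
            ((((2*k).choose k : ℕ) : ZMod p) * y^k) := by
      refine Finset.sum_subset (Finset.range_subset_range.mpr (by omega)) ?_
      intro k _ hk
      have hk' : n < k := by
        by_contra h
        exact hk (Finset.mem_range.mpr (by omega))
      rw [Nat.choose_eq_zero_of_lt (show n+k < 2*k by omega)]
      push_cast
      rw [zero_mul]
    rw [h1, h2, Finset.sum_mul]
    refine Finset.sum_congr rfl (fun k _ => by ring)
  rw [Finset.sum_congr rfl hD, Finset.sum_comm]
  -- now inner sums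
  have hT : ∀ k : ℕ, ∑ n ∈ Finset.Icc 1 (p-1), (((n+k).choose (2*k) : ℕ) : ZMod p) *
          ((((2*k).choose k : ℕ) : ZMod p) * (y^k * (((n : ZMod p))^s)⁻¹))
      = (((2*k).choose k : ℕ) : ZMod p) *
          (y^k * ∑ n ∈ Finset.Icc 1 (p-1), (((n+k).choose (2*k) : ℕ) : ZMod p) * (((n : ZMod p))^s)⁻¹) := by
    intro k
    rw [Finset.mul_sum, Finset.mul_sum]
    refine Finset.sum_congr rfl (fun n _ => by ring)
  rw [Finset.sum_congr rfl (fun k _ => hT k)]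
  -- split off k = 0
  rw [Finset.range_eq_Ico, Finset.sum_eq_sum_Ico_succ_bot (by omega : 0 < p)]
  have hT0 : (((2*0).choose 0 : ℕ) : ZMod p) *
      (y^0 * ∑ n ∈ Finset.Icc 1 (p-1), (((n+0).choose (2*0) : ℕ) : ZMod p) * (((n : ZMod p))^s)⁻¹)
      = if s = 2 ∧ p = 3 then (-1 : ZMod p) else 0 := by
    have e : ∀ n : ℕ, (n+0).choose (2*0) = 1 := by intro n; simp
    simp only [e, Nat.mul_zero, Nat.choose_zero_right, Nat.cast_one, pow_zero, one_mul]
    exact keyA p hodd' hp3 s hs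
  rw [hT0]
  -- split the rest at m
  rw [← Finset.sum_Ico_consecutive _ (show 1 ≤ m+1 by omega) (show m+1 ≤ p by omega)]
  have hvan : ∑ k ∈ Finset.Ico (m+1) p, (((2*k).choose k : ℕ) : ZMod p) *
      (y^k * ∑ n ∈ Finset.Icc 1 (p-1), (((n+k).choose (2*k) : ℕ) : ZMod p) * (((n : ZMod p))^s)⁻¹) = 0 := by
    refine Finset.sum_eq_zero (fun k hk => ?_)
    have hk' := Finset.mem_Ico.mp hk
    rw [keyC p hodd' k (by omega) (by omega), zero_mul]
  rw [hvan, add_zero]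
  have hmain : ∑ k ∈ Finset.Ico 1 (m+1), (((2*k).choose k : ℕ) : ZMod p) *
      (y^k * ∑ n ∈ Finset.Icc 1 (p-1), (((n+k).choose (2*k) : ℕ) : ZMod p) * (((n : ZMod p))^s)⁻¹)
      = ∑ k ∈ Finset.Icc 1 m, ((-x : ℤ)^k : ZMod p) * (((k : ℕ) : ZMod p)^s)⁻¹ := by
    rw [Finset.Ico_add_one_right_eq_Icc]
    refine Finset.sum_congr rfl (fun k hk => ?_)
    have hk' := Finset.mem_Icc.mp hk
    have hB := keyB p hodd' hp3 s hs k (by omega) (by omega)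
    calc (((2*k).choose k : ℕ) : ZMod p) *
        (y^k * ∑ n ∈ Finset.Icc 1 (p-1), (((n+k).choose (2*k) : ℕ) : ZMod p) * (((n : ZMod p))^s)⁻¹)
        = y^k * ((((2*k).choose k : ℕ) : ZMod p) *
            ∑ n ∈ Finset.Icc 1 (p-1), (((n+k).choose (2*k) : ℕ) : ZMod p) * (((n : ZMod p))^s)⁻¹) := by ring
      _ = y^k * ((-1)^k * (((k : ℕ) : ZMod p)^s)⁻¹) := by rw [hB]
      _ = ((-x : ℤ)^k : ZMod p) * (((k : ℕ) : ZMod p)^s)⁻¹ := by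
          push_cast
          ring
  rw [hmain]
  by_cases hc : s = 2 ∧ p = 3
  · rw [if_pos hc, if_pos hc]
    ring
  · rw [if_neg hc, if_neg hc]
    ring
end
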